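/- arXiv:0712.4294 — 5 statements merged into one kernel-verified Lean document; each statement's English description precedes it below -/
import Mathlib

section
/- Let d ≥ 3 and 1 ≤ i ≠ j ≤ d. Then the elementary matrix E_{ij}(1) is a U1-element of SL(d,ℤ): there exists a constant C > 0 such that for every integer n, the word length of E_{ij}(1)ⁿ = E_{ij}(n) with respect to the generating set {E_{kl}(1) : 1 ≤ k ≠ l ≤ d} is at most C·log(|n| + 1). -/
/-- The word length of `g` with respect to a generating set `S`:
the least `n` such that `g` is a product of `n` elements of `S ∪ S⁻¹`. -/
noncomputable def wordLength {G : Type*} [Group G] (S : Set G) (g : G) : ℕ :=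
  sInf {n | ∃ l : List G, (∀ x ∈ l, x ∈ S ∪ S⁻¹) ∧ l.length = n ∧ l.prod = g}

/-- The set of elementary matrices `E k l 1` (`k ≠ l`) in `SL(d, ℤ)`. -/
def elemGens (d : ℕ) : Set (Matrix.SpecialLinearGroup (Fin d) ℤ) :=
  {γ | ∃ k l : Fin d, k ≠ l ∧ (γ : Matrix (Fin d) (Fin d) ℤ) = Matrix.transvection k l 1}

/-- The elementary matrix `E i j 1` as an element of `SL(d, ℤ)`. -/
def elemSL {d : ℕ} (i j : Fin d) (hij : i ≠ j) : Matrix.SpecialLinearGroup (Fin d) ℤ :=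
  ⟨Matrix.transvection i j 1, Matrix.det_transvection_of_ne i j hij 1⟩

namespace U1aux

/-! ### the golden ratio -/

noncomputable def gr : ℝ := (1 + Real.sqrt 5) / 2

lemma gr_sq : gr ^ 2 = gr + 1 := by
  have h : Real.sqrt 5 ^ 2 = 5 := Real.sq_sqrt (by norm_num)
  unfold gr; nlinarith [h]

lemma gr_lb : (1.61 : ℝ) < gr := by
  have h : (2.23 : ℝ) < Real.sqrt 5 := by
    rw [show (2.23:ℝ) < Real.sqrt 5 ↔ (2.23:ℝ)^2 < 5 from Real.lt_sqrt (by norm_num)]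
    norm_num
  unfold gr; linarith

lemma gr_ub : gr < (1.62 : ℝ) := by
  have h : Real.sqrt 5 < (2.24 : ℝ) := by
    rw [Real.sqrt_lt' (by norm_num)]; norm_num
  unfold gr; linarith

lemma gr_pos : (0:ℝ) < gr := by linarith [gr_lb]

/-! ### word-length upper-bound machinery -/

section Rep
variable {G : Type*} [Group G] (S : Set G)

def Rep (g : G) (n : ℕ) : Prop :=
  ∃ l : List G, (∀ x ∈ l, x ∈ S ∪ S⁻¹) ∧ l.length ≤ n ∧ l.prod = g

variable {S}

lemma rep_one : Rep S (1 : G) 0 := ⟨[], by simp, by simp, rfl⟩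

lemma rep_mono {g : G} {m n : ℕ} (h : m ≤ n) (hg : Rep S g m) : Rep S g n := by
  obtain ⟨l, h1, h2, h3⟩ := hg; exact ⟨l, h1, h2.trans h, h3⟩

lemma rep_mul {g h : G} {m n : ℕ} (hg : Rep S g m) (hh : Rep S h n) :
    Rep S (g * h) (m + n) := by
  obtain ⟨l, h1, h2, h3⟩ := hg; obtain ⟨l', h1', h2', h3'⟩ := hh
  refine ⟨l ++ l', ?_, ?_, by simp [h3, h3']⟩
  · intro x hx; rcases List.mem_append.1 hx with h | h
    · exact h1 x h
    · exact h1' x h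
  · simpa using Nat.add_le_add h2 h2'

lemma symm_mem {g : G} (h : g ∈ S ∪ S⁻¹) : g⁻¹ ∈ S ∪ S⁻¹ := by
  rcases h with h | h
  · exact Or.inr (by simpa using h)
  · exact Or.inl (by simpa using h)

lemma rep_inv {g : G} {n : ℕ} (hg : Rep S g n) : Rep S g⁻¹ n := by
  obtain ⟨l, h1, h2, h3⟩ := hg
  refine ⟨(l.map fun x => x⁻¹).reverse, ?_, by simpa using h2, ?_⟩
  · intro x hx
    simp only [List.mem_reverse, List.mem_map] at hx
    obtain ⟨y, hy, rfl⟩ := hx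
    exact symm_mem (h1 y hy)
  · rw [← List.prod_inv_reverse, h3]

lemma rep_mem {g : G} (h : g ∈ S ∪ S⁻¹) : Rep S g 1 :=
  ⟨[g], by simpa using h, by simp, by simp⟩

lemma rep_pow {g : G} (h : g ∈ S ∪ S⁻¹) (n : ℕ) : Rep S (g ^ n) n :=
  ⟨List.replicate n g, fun x hx => by rw [List.eq_of_mem_replicate hx]; exact h,
    by simp, List.prod_replicate n g⟩

lemma rep_zpow {g : G} (h : g ∈ S ∪ S⁻¹) (z : ℤ) : Rep S (g ^ z) z.natAbs := by
  rcases Int.natAbs_eq z with hz | hz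
  · rw [hz, zpow_natCast]; exact rep_pow h _
  · have he : g ^ z = (g ^ z.natAbs)⁻¹ := by
      nth_rewrite 1 [hz]; rw [zpow_neg, zpow_natCast]
    rw [he]; exact rep_inv (rep_pow h _)

lemma rep_conj {g w : G} {n : ℕ} (hw : w ∈ S ∪ S⁻¹) (hg : Rep S g n) :
    Rep S (w * g * w⁻¹) (n + 2) := by
  have := rep_mul (rep_mul (rep_mem hw) hg) (rep_inv (rep_mem hw))
  exact rep_mono (by omega) this

lemma wordLength_le {g : G} {n : ℕ} (h : Rep S g n) : wordLength S g ≤ n := by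
  obtain ⟨l, h1, h2, h3⟩ := h
  exact le_trans (Nat.sInf_le ⟨l, h1, rfl, h3⟩) h2

end Rep

/-! ### matrix identities -/

open Matrix

variable {d : ℕ}

lemma comm_col (a b c : Fin d) (hab : a ≠ b) (hcb : c ≠ b) :
    transvection a b (1:ℤ) * transvection c b 1 = transvection c b 1 * transvection a b 1 := by
  have h1 : single a b (1:ℤ) * single c b 1 = 0 :=
    single_mul_single_of_ne 1 a b c (Ne.symm hcb) 1
  have h2 : single c b (1:ℤ) * single a b 1 = 0 :=
    single_mul_single_of_ne 1 c b a (Ne.symm hab) 1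
  simp only [transvection, mul_add, add_mul, one_mul, mul_one, h1, h2]
  abel

lemma comm_row (a b c : Fin d) (hba : b ≠ a) (hca : c ≠ a) :
    transvection a b (1:ℤ) * transvection a c 1 = transvection a c 1 * transvection a b 1 := by
  have h1 : single a b (1:ℤ) * single a c 1 = 0 :=
    single_mul_single_of_ne 1 a b a hba 1
  have h2 : single a c (1:ℤ) * single a b 1 = 0 :=
    single_mul_single_of_ne 1 a c a hca 1
  simp only [transvection, mul_add, add_mul, one_mul, mul_one, h1, h2]
  abel

lemma steinberg (a b c : Fin d) (hab : a ≠ b) (hcb : c ≠ b) (hac : a ≠ c) :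
    transvection a c (1:ℤ) * transvection c b 1 =
      (transvection a b 1 * transvection c b 1) * transvection a c 1 := by
  have h1 : single a c (1:ℤ) * single c b 1 = single a b 1 := by
    simpa using single_mul_single_same a c b (c := (1:ℤ)) (1:ℤ)
  have h2 : single a b (1:ℤ) * single c b 1 = 0 :=
    single_mul_single_of_ne 1 a b c (Ne.symm hcb) 1
  have h3 : single a b (1:ℤ) * single a c 1 = 0 :=
    single_mul_single_of_ne 1 a b a (Ne.symm hab) 1
  have h4 : single c b (1:ℤ) * single a c 1 = 0 :=
    single_mul_single_of_ne 1 c b a (Ne.symm hab) 1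
  simp only [transvection, mul_add, add_mul, one_mul, mul_one, h1, h2, h3, h4,
    mul_zero, zero_mul]
  abel

end U1aux

open U1aux in
set_option maxHeartbeats 1000000 in
theorem elementary_is_U1 (d : ℕ) (hd : 3 ≤ d) (i j : Fin d) (hij : i ≠ j) :
    ∃ C : ℝ, 0 < C ∧ ∀ n : ℤ,
      (wordLength (elemGens d) (elemSL i j hij ^ n) : ℝ) ≤ C * Real.log (|n| + 1) := by
  classical
  -- pick a third index
  obtain ⟨k, hki, hkj⟩ : ∃ k : Fin d, k ≠ i ∧ k ≠ j := by
    by_contra hcon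
    push_neg at hcon
    have hsub : (Finset.univ : Finset (Fin d)) ⊆ {i, j} := by
      intro x _
      rcases eq_or_ne x i with rfl | hxi
      · simp
      · simp [hcon x hxi]
    have h2 := Finset.card_le_card hsub
    have h3 : ({i, j} : Finset (Fin d)).card ≤ 2 :=
      (Finset.card_insert_le _ _).trans (by simp)
    rw [Finset.card_univ, Fintype.card_fin] at h2
    omega
  have hik : i ≠ k := hki.symm
  set S := elemGens d with hS
  set X := elemSL i j hij with hX
  set Y := elemSL k j hkj with hY
  set P := elemSL i k hik with hP
  set Q := elemSL k i hki with hQ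
  have memX : X ∈ S ∪ S⁻¹ := Or.inl ⟨i, j, hij, rfl⟩
  have memY : Y ∈ S ∪ S⁻¹ := Or.inl ⟨k, j, hkj, rfl⟩
  have memP : P ∈ S ∪ S⁻¹ := Or.inl ⟨i, k, hik, rfl⟩
  have memQ : Q ∈ S ∪ S⁻¹ := Or.inl ⟨k, i, hki, rfl⟩
  -- basic relations
  have cXY : Commute X Y := by
    show X * Y = Y * X
    apply Subtype.ext
    simp only [Matrix.SpecialLinearGroup.coe_mul, hX, hY, elemSL]
    exact comm_col i j k hij hkj
  have cPX : Commute P X := by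
    show P * X = X * P
    apply Subtype.ext
    simp only [Matrix.SpecialLinearGroup.coe_mul, hX, hP, elemSL]
    exact comm_row i k j hki hij.symm
  have cQY : Commute Q Y := by
    show Q * Y = Y * Q
    apply Subtype.ext
    simp only [Matrix.SpecialLinearGroup.coe_mul, hY, hQ, elemSL]
    exact comm_row k i j hik hkj.symm
  have sPY : P * Y = (X * Y) * P := by
    apply Subtype.ext
    simp only [Matrix.SpecialLinearGroup.coe_mul, hX, hY, hP, elemSL]
    exact steinberg i j k hij hkj hik
  have sQX : Q * X = (Y * X) * Q := by
    apply Subtype.ext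
    simp only [Matrix.SpecialLinearGroup.coe_mul, hX, hY, hQ, elemSL]
    exact steinberg k j i hkj hij hki
  -- conjugation action on the abelian subgroup {X^x Y^y}
  have u_mul : ∀ x y x' y' : ℤ,
      X ^ (x + x') * Y ^ (y + y') = (X ^ x * Y ^ y) * (X ^ x' * Y ^ y') := by
    intro x y x' y'
    rw [zpow_add, zpow_add, (cXY.symm.zpow_zpow y x').mul_mul_mul_comm]
  have conjP : ∀ x y : ℤ, P * (X ^ x * Y ^ y) * P⁻¹ = X ^ (x + y) * Y ^ y := by
    intro x y
    have hPX : ∀ z : ℤ, P * X ^ z * P⁻¹ = X ^ z := by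
      intro z
      rw [(cPX.zpow_right z).eq, mul_inv_cancel_right]
    have hPY : ∀ z : ℤ, P * Y ^ z * P⁻¹ = X ^ z * Y ^ z := by
      intro z
      have h1 : (MulAut.conj P) Y = X * Y := by
        rw [MulAut.conj_apply, sPY, mul_inv_cancel_right]
      have h2 : (MulAut.conj P) (Y ^ z) = ((MulAut.conj P) Y) ^ z := map_zpow _ _ _
      rw [MulAut.conj_apply] at h2
      rw [h2, h1, cXY.mul_zpow]
    calc P * (X ^ x * Y ^ y) * P⁻¹
        = (P * X ^ x * P⁻¹) * (P * Y ^ y * P⁻¹) := by group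
      _ = X ^ x * (X ^ y * Y ^ y) := by rw [hPX, hPY]
      _ = X ^ (x + y) * Y ^ y := by rw [← mul_assoc, ← zpow_add]
  have conjQ : ∀ x y : ℤ, Q * (X ^ x * Y ^ y) * Q⁻¹ = X ^ x * Y ^ (x + y) := by
    intro x y
    have hQY : ∀ z : ℤ, Q * Y ^ z * Q⁻¹ = Y ^ z := by
      intro z
      rw [(cQY.zpow_right z).eq, mul_inv_cancel_right]
    have hQX : ∀ z : ℤ, Q * X ^ z * Q⁻¹ = X ^ z * Y ^ z := by
      intro z
      have h1 : (MulAut.conj Q) X = Y * X := by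
        rw [MulAut.conj_apply, sQX, mul_inv_cancel_right]
      have h2 : (MulAut.conj Q) (X ^ z) = ((MulAut.conj Q) X) ^ z := map_zpow _ _ _
      rw [MulAut.conj_apply] at h2
      rw [h2, h1, cXY.symm.mul_zpow, (cXY.zpow_zpow z z).symm.eq]
    calc Q * (X ^ x * Y ^ y) * Q⁻¹
        = (Q * X ^ x * Q⁻¹) * (Q * Y ^ y * Q⁻¹) := by group
      _ = (X ^ x * Y ^ x) * Y ^ y := by rw [hQX, hQY]
      _ = X ^ x * Y ^ (x + y) := by rw [mul_assoc, ← zpow_add]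
  have conjPinv : ∀ x y : ℤ, P⁻¹ * (X ^ x * Y ^ y) * P = X ^ (x - y) * Y ^ y := by
    intro x y
    have h := conjP (x - y) y
    rw [sub_add_cancel] at h
    rw [← h]; group
  have conjQinv : ∀ x y : ℤ, Q⁻¹ * (X ^ x * Y ^ y) * Q = X ^ x * Y ^ (y - x) := by
    intro x y
    have h := conjQ x (y - x)
    rw [add_sub_cancel] at h
    rw [← h]; group
  -- word length of the basic vectors
  have rep_u : ∀ x y : ℤ, Rep S (X ^ x * Y ^ y) (x.natAbs + y.natAbs) := by
    intro x y
    exact rep_mul (rep_zpow memX x) (rep_zpow memY y)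
  have two_mul_succ : ∀ N : ℕ, gr ^ (2 * (N + 1)) = gr ^ 2 * gr ^ (2 * N) := by
    intro N
    rw [show 2 * (N + 1) = 2 + 2 * N by ring, pow_add]
  have grpow_ge1 : ∀ N : ℕ, (1 : ℝ) ≤ gr ^ (2 * N) := by
    intro N
    exact one_le_pow₀ (by linarith [gr_lb])
  -- the expanding chain
  have chainE : ∀ N : ℕ, ∀ x y : ℤ, |(x : ℝ) - gr * y| ≤ 3 →
      |gr * x + y| ≤ gr ^ (2 * N) + 4 → Rep S (X ^ x * Y ^ y) (8 * N + 8) := by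
    intro N
    induction N with
    | zero =>
      intro x y hb ha
      rw [mul_zero, pow_zero] at ha
      have hb' := abs_le.1 hb
      have ha' := abs_le.1 ha
      have hx : |(x : ℝ)| ≤ 3.5 := by
        have key : (x : ℝ) * (gr + 2) = gr * (gr * x + y) + ((x : ℝ) - gr * y) := by
          linear_combination (-(x : ℝ)) * gr_sq
        rw [abs_le]
        constructor <;> nlinarith [gr_lb, gr_ub, ha'.1, ha'.2, hb'.1, hb'.2]
      have hy : |(y : ℝ)| ≤ 3.5 := by
        have key : (y : ℝ) * (gr + 2) = (gr * x + y) - gr * ((x : ℝ) - gr * y) := by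
          linear_combination (-(y : ℝ)) * gr_sq
        rw [abs_le]
        constructor <;> nlinarith [gr_lb, gr_ub, ha'.1, ha'.2, hb'.1, hb'.2]
      have hxn : x.natAbs ≤ 4 := by
        by_contra hcon
        push_neg at hcon
        have h5 : (5 : ℝ) ≤ (x.natAbs : ℝ) := by exact_mod_cast hcon
        rw [Nat.cast_natAbs] at h5
        push_cast at h5
        linarith
      have hyn : y.natAbs ≤ 4 := by
        by_contra hcon
        push_neg at hcon
        have h5 : (5 : ℝ) ≤ (y.natAbs : ℝ) := by exact_mod_cast hcon
        rw [Nat.cast_natAbs] at h5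
        push_cast at h5
        linarith
      exact rep_mono (by omega) (rep_u x y)
    | succ N ih =>
      intro x y hb ha
      set r : ℤ := round ((x : ℝ) - gr * y) with hrdef
      have hround : |((x : ℝ) - gr * y) - r| ≤ 1 / 2 := abs_sub_round _
      have hround' := abs_le.1 hround
      have hb'' := abs_le.1 hb
      have hrabs : |(r : ℝ)| ≤ 7 / 2 := by
        rw [abs_le]; constructor <;> linarith
      have hrabs' := abs_le.1 hrabs
      have hrnat : r.natAbs ≤ 3 := by
        have h1 : ((|r| : ℤ) : ℝ) ≤ 7 / 2 := by rw [Int.cast_abs]; exact hrabs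
        have h2 : ((|r| : ℤ) : ℝ) < 4 := lt_of_le_of_lt h1 (by norm_num)
        have h3 : (|r| : ℤ) < 4 := by exact_mod_cast h2
        rw [Int.abs_eq_natAbs] at h3
        have h4 : (r.natAbs : ℤ) ≤ 3 := by linarith
        exact_mod_cast h4
      set x' : ℤ := x - r - y with hx'def
      set y' : ℤ := -(x - r) + 2 * y with hy'def
      have hb' : |(x' : ℝ) - gr * y'| ≤ 3 := by
        have key : (x' : ℝ) - gr * y' = gr ^ 2 * (((x : ℝ) - gr * y) - r) := by
          rw [hx'def, hy'def]
          push_cast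
          linear_combination (-((x : ℝ) - r) + (gr + 1) * y) * gr_sq
        rw [key, abs_mul, abs_of_nonneg (pow_nonneg gr_pos.le 2)]
        have h27 : gr ^ 2 ≤ 27 / 10 := by nlinarith [gr_ub, gr_pos]
        have h28 := mul_le_mul_of_nonneg_left hround (pow_nonneg gr_pos.le 2)
        nlinarith [h27, h28, pow_nonneg gr_pos.le 2]
      have ha' : |gr * x' + y'| ≤ gr ^ (2 * N) + 4 := by
        have key : gr ^ 2 * (gr * x' + y') = gr * ((x : ℝ) - r) + y := by
          rw [hx'def, hy'def]
          push_cast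
          linear_combination (gr * ((x : ℝ) - r) + (1 - gr) * y) * gr_sq
        have ha2 := abs_le.1 ha
        rw [two_mul_succ N] at ha2
        have hsq : (0 : ℝ) < gr ^ 2 := pow_pos gr_pos 2
        have hgr2 : gr ^ 2 ≤ 27 / 10 := by nlinarith [gr_ub, gr_pos]
        have hgr_r1 : gr * (r : ℝ) ≤ gr * (7 / 2) := mul_le_mul_of_nonneg_left hrabs'.2 gr_pos.le
        have hgr_r2 : gr * (-(7 / 2) : ℝ) ≤ gr * r := mul_le_mul_of_nonneg_left hrabs'.1 gr_pos.le
        rw [abs_le]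
        constructor
        · have hstep : gr ^ 2 * (-(gr ^ (2 * N) + 4)) ≤ gr * ((x : ℝ) - r) + y := by
            have hx1 := ha2.1
            nlinarith [gr_sq, gr_lb, gr_pos, hgr_r1]
          rw [← key] at hstep
          exact le_of_mul_le_mul_left hstep hsq
        · have hstep : gr * ((x : ℝ) - r) + y ≤ gr ^ 2 * (gr ^ (2 * N) + 4) := by
            have hx1 := ha2.2
            nlinarith [gr_sq, gr_lb, gr_pos, hgr_r2]
          rw [← key] at hstep
          exact le_of_mul_le_mul_left hstep hsq
      have hrec := ih x' y' hb' ha'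
      have e1 : X ^ x * Y ^ y = X ^ r * (P * (Q * (X ^ x' * Y ^ y') * Q⁻¹) * P⁻¹) := by
        rw [conjQ, conjP]
        have e2 : x' + (x' + y') = x - r := by rw [hx'def, hy'def]; ring
        have e3 : x' + y' = y := by rw [hx'def, hy'def]; ring
        rw [e2, e3, ← mul_assoc, ← zpow_add, add_sub_cancel]
      rw [e1]
      have c3 := rep_mul (rep_zpow memX r) (rep_conj memP (rep_conj memQ hrec))
      exact rep_mono (by omega) c3
  -- the contracting chain, via the Weyl-type symmetry (x,y) ↦ (y,-x)
  have chainC : ∀ N : ℕ, ∀ x y : ℤ, |gr * x + y| ≤ 3 →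
      |(x : ℝ) - gr * y| ≤ gr ^ (2 * N) + 4 → Rep S (X ^ x * Y ^ y) (8 * N + 14) := by
    intro N x y ha hb
    have h1 : |(y : ℝ) - gr * ((-x : ℤ) : ℝ)| ≤ 3 := by
      push_cast
      rw [show (y : ℝ) - gr * (-x) = gr * x + y by ring]
      exact ha
    have h2 : |gr * ((y : ℤ) : ℝ) + ((-x : ℤ) : ℝ)| ≤ gr ^ (2 * N) + 4 := by
      push_cast
      rw [show gr * (y : ℝ) + -(x : ℝ) = -((x : ℝ) - gr * y) by ring, abs_neg]
      exact hb
    have hrec := chainE N y (-x) h1 h2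
    have e1 : X ^ x * Y ^ y
        = P⁻¹ * (Q * (P⁻¹ * (X ^ y * Y ^ (-x)) * (P⁻¹)⁻¹) * Q⁻¹) * (P⁻¹)⁻¹ := by
      rw [inv_inv, conjPinv, conjQ, conjPinv]
      rw [show y - -x - (y - -x + -x) = x by ring, show y - -x + -x = y by ring]
    rw [e1]
    exact rep_mono (by omega)
      (rep_conj (symm_mem memP) (rep_conj memQ (rep_conj (symm_mem memP) hrec)))
  -- decomposition of (n,0) into two vectors near the expanding/contracting lines
  have main : ∀ n : ℤ, ∀ N : ℕ, 8 * (|(n : ℝ)| + 1) ≤ gr ^ (2 * N) →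
      Rep S (X ^ n) (16 * N + 22) := by
    intro n N hN
    have hdenom : (0 : ℝ) < gr ^ 2 + 1 := by positivity
    have hgr2 : gr ^ 2 ≤ 27 / 10 := by nlinarith [gr_ub, gr_pos]
    set p : ℤ := round (gr ^ 2 * (n : ℝ) / (gr ^ 2 + 1)) with hpdef
    set q : ℤ := round (gr * ((n : ℝ) - p)) with hqdef
    have hr1 := abs_le.1 (abs_sub_round (gr ^ 2 * (n : ℝ) / (gr ^ 2 + 1)))
    have hr2 := abs_le.1 (abs_sub_round (gr * ((n : ℝ) - p)))
    have hfield : gr ^ 2 * (n : ℝ) / (gr ^ 2 + 1) * (gr ^ 2 + 1) = gr ^ 2 * n := by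
      field_simp
    have e2 := mul_le_mul_of_nonneg_right hr1.2 hdenom.le
    have e3 := mul_le_mul_of_nonneg_right hr1.1 hdenom.le
    rw [sub_mul, hfield] at e2 e3
    have h1a : gr ^ 2 * (n : ℝ) - p * (gr ^ 2 + 1) ≤ (gr ^ 2 + 1) / 2 := by linarith
    have h1b : -((gr ^ 2 + 1) / 2) ≤ gr ^ 2 * (n : ℝ) - p * (gr ^ 2 + 1) := by linarith
    have hgB1 : gr * ((gr * ((n : ℝ) - p)) - q) ≤ gr * (1 / 2) :=
      mul_le_mul_of_nonneg_left hr2.2 gr_pos.le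
    have hgB2 : gr * (-(1 / 2) : ℝ) ≤ gr * ((gr * ((n : ℝ) - p)) - q) :=
      mul_le_mul_of_nonneg_left hr2.1 gr_pos.le
    have key : (p : ℝ) - gr * q
        = -(gr ^ 2 * (n : ℝ) - p * (gr ^ 2 + 1)) + gr * ((gr * ((n : ℝ) - p)) - q) := by
      ring
    have hb1 : |(p : ℝ) - gr * q| ≤ 3 := by
      rw [abs_le]
      constructor <;> nlinarith [key, h1a, h1b, hgB1, hgB2, hgr2, gr_ub, gr_pos]
    -- size bound for p
    have hgn1 : gr ^ 2 * (n : ℝ) ≤ gr ^ 2 * |(n : ℝ)| :=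
      mul_le_mul_of_nonneg_left (le_abs_self _) (pow_nonneg gr_pos.le 2)
    have hgn2 : gr ^ 2 * (-|(n : ℝ)|) ≤ gr ^ 2 * n :=
      mul_le_mul_of_nonneg_left (neg_abs_le _) (pow_nonneg gr_pos.le 2)
    have habsn : (0:ℝ) ≤ |(n : ℝ)| := abs_nonneg _
    have hp1 : (p : ℝ) ≤ |(n : ℝ)| + 1 := by
      have c1 : (p : ℝ) * (gr ^ 2 + 1) ≤ (|(n : ℝ)| + 1) * (gr ^ 2 + 1) := by nlinarith
      exact le_of_mul_le_mul_right c1 hdenom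
    have hp2 : -(|(n : ℝ)| + 1) ≤ (p : ℝ) := by
      have c1 : (-(|(n : ℝ)| + 1)) * (gr ^ 2 + 1) ≤ (p : ℝ) * (gr ^ 2 + 1) := by nlinarith
      exact le_of_mul_le_mul_right c1 hdenom
    -- size bound for q
    have hnp : |(n : ℝ) - p| ≤ 2 * |(n : ℝ)| + 1 := by
      have t := (abs_sub (n : ℝ) (p : ℝ))
      have hpa : |(p : ℝ)| ≤ |(n : ℝ)| + 1 := abs_le.2 ⟨hp2, hp1⟩
      calc |(n : ℝ) - p| ≤ |(n : ℝ)| + |(p : ℝ)| := t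
        _ ≤ 2 * |(n : ℝ)| + 1 := by linarith
    have hq : |(q : ℝ)| ≤ gr * (2 * |(n : ℝ)| + 1) + 1 / 2 := by
      have t1 : |(q : ℝ)| ≤ |(q : ℝ) - gr * ((n : ℝ) - p)| + |gr * ((n : ℝ) - p)| := by
        calc |(q : ℝ)| = |((q : ℝ) - gr * ((n : ℝ) - p)) + gr * ((n : ℝ) - p)| := by ring_nf
          _ ≤ _ := abs_add_le _ _
      have t2 : |(q : ℝ) - gr * ((n : ℝ) - p)| ≤ 1 / 2 := by
        rw [abs_sub_comm]; exact abs_le.2 hr2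
      have t3 : |gr * ((n : ℝ) - p)| = gr * |(n : ℝ) - p| := by
        rw [abs_mul, abs_of_pos gr_pos]
      have t4 : gr * |(n : ℝ) - p| ≤ gr * (2 * |(n : ℝ)| + 1) :=
        mul_le_mul_of_nonneg_left hnp gr_pos.le
      linarith [t1, t2, t3 ▸ t4]
    have hq' := abs_le.1 hq
    -- the two main size hypotheses
    have t5 : gr * (3 * |(n : ℝ)| + 2) ≤ (1.62 : ℝ) * (3 * |(n : ℝ)| + 2) :=
      mul_le_mul_of_nonneg_right gr_ub.le (by positivity)
    have hA1 : |gr * (p : ℝ) + (q : ℝ)| ≤ gr ^ (2 * N) + 4 := by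
      have t1 : |gr * (p : ℝ) + q| ≤ gr * |(p : ℝ)| + |(q : ℝ)| := by
        calc |gr * (p : ℝ) + q| ≤ |gr * (p : ℝ)| + |(q : ℝ)| := abs_add_le _ _
          _ = gr * |(p : ℝ)| + |(q : ℝ)| := by rw [abs_mul, abs_of_pos gr_pos]
      have t2 : gr * |(p : ℝ)| ≤ gr * (|(n : ℝ)| + 1) :=
        mul_le_mul_of_nonneg_left (abs_le.2 ⟨hp2, hp1⟩) gr_pos.le
      have t6 : (0:ℝ) ≤ gr ^ (2*N) := (pow_nonneg gr_pos.le _)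
      linarith [t1, t2, hq, t5, hN, habsn]
    have hB2 : |((n - p : ℤ) : ℝ) - gr * ((-q : ℤ) : ℝ)| ≤ gr ^ (2 * N) + 4 := by
      push_cast
      have t1 : |(n : ℝ) - p - gr * (-(q : ℝ))| ≤ |(n : ℝ) - p| + gr * |(q : ℝ)| := by
        calc |(n : ℝ) - p - gr * (-(q : ℝ))|
            = |((n : ℝ) - p) + gr * (q : ℝ)| := by ring_nf
          _ ≤ |(n : ℝ) - p| + |gr * (q : ℝ)| := abs_add_le _ _
          _ = |(n : ℝ) - p| + gr * |(q : ℝ)| := by rw [abs_mul, abs_of_pos gr_pos]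
      have t2 : gr * |(q : ℝ)| ≤ gr * (gr * (2 * |(n : ℝ)| + 1) + 1 / 2) :=
        mul_le_mul_of_nonneg_left hq gr_pos.le
      have t3 : gr ^ 2 * (2 * |(n : ℝ)| + 1) ≤ (27 / 10) * (2 * |(n : ℝ)| + 1) :=
        mul_le_mul_of_nonneg_right hgr2 (by positivity)
      have t6 : (0:ℝ) ≤ gr ^ (2*N) := (pow_nonneg gr_pos.le _)
      linarith [t1, t2, t3, hnp, hN, gr_ub, gr_pos, habsn]
    have ha2c : |gr * ((n - p : ℤ) : ℝ) + ((-q : ℤ) : ℝ)| ≤ 3 := by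
      push_cast
      have : gr * ((n : ℝ) - p) + -(q : ℝ) = gr * ((n : ℝ) - p) - q := by ring
      rw [this]
      have := abs_le.2 hr2
      linarith [this]
    have hrep1 := chainE N p q hb1 hA1
    have hrep2 := chainC N (n - p) (-q) ha2c hB2
    have e : X ^ n = (X ^ p * Y ^ q) * (X ^ (n - p) * Y ^ (-q)) := by
      have h := u_mul p q (n - p) (-q)
      rw [show p + (n - p) = n by ring, show q + -q = 0 by ring, zpow_zero, mul_one] at h
      exact h
    rw [e]
    exact rep_mono (by omega) (rep_mul hrep1 hrep2)
  -- final assembly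
  refine ⟨200 / Real.log 2, div_pos (by norm_num) (Real.log_pos (by norm_num)), ?_⟩
  intro n
  rcases eq_or_ne n 0 with rfl | hn
  · have h0 : wordLength S (X ^ (0 : ℤ)) = 0 :=
      Nat.le_zero.1 (wordLength_le (by rw [zpow_zero]; exact rep_one))
    rw [h0]
    simp
  · set m : ℕ := n.natAbs with hm
    have hm1 : 1 ≤ m := Int.natAbs_pos.2 hn
    set N : ℕ := Nat.clog 2 (8 * (m + 1)) with hNdef
    have hcast : ((m : ℕ) : ℝ) = |(n : ℝ)| := by
      rw [hm, Nat.cast_natAbs]; exact Int.cast_abs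
    have hpow : 8 * ((m : ℝ) + 1) ≤ gr ^ (2 * N) := by
      have h2 : 8 * (m + 1) ≤ 2 ^ N := Nat.le_pow_clog (by norm_num) _
      have h2r : (8 * ((m : ℝ) + 1)) ≤ (2 : ℝ) ^ N := by
        have := (Nat.cast_le (α := ℝ)).2 h2
        push_cast at this
        linarith
      have h3 : ((2 : ℝ)) ^ N ≤ gr ^ (2 * N) := by
        rw [pow_mul]
        exact pow_le_pow_left₀ (by norm_num) (by nlinarith [gr_sq, gr_lb]) N
      linarith
    have hrep := main n N (by rw [← hcast]; exact hpow)
    have hword : (wordLength S (X ^ n) : ℝ) ≤ 16 * N + 22 := by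
      have h := wordLength_le hrep
      have h' := (Nat.cast_le (α := ℝ)).2 h
      push_cast at h'
      linarith
    have hN1 : 1 ≤ N := Nat.clog_pos (by norm_num) (by omega)
    have hNlt : (2 : ℕ) ^ (N - 1) < 8 * (m + 1) :=
      Nat.pow_pred_clog_lt_self (x := 8 * (m + 1)) (by norm_num) (by omega)
    have hlog2pos : (0 : ℝ) < Real.log 2 := Real.log_pos (by norm_num)
    have hL : Real.log 2 ≤ Real.log ((m : ℝ) + 1) := by
      apply Real.log_le_log (by norm_num)
      have : (1 : ℝ) ≤ (m : ℝ) := by exact_mod_cast hm1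
      linarith
    have hNreal : ((N : ℝ) - 1) * Real.log 2 ≤ Real.log (8 * ((m : ℝ) + 1)) := by
      have hcast2 : ((2 : ℝ)) ^ (N - 1) < 8 * ((m : ℝ) + 1) := by
        have := (Nat.cast_lt (α := ℝ)).2 hNlt
        push_cast at this
        linarith
      have hlt := Real.log_lt_log (by positivity) hcast2
      rw [Real.log_pow] at hlt
      have hc3 : ((N - 1 : ℕ) : ℝ) = (N : ℝ) - 1 := by
        rw [Nat.cast_sub hN1]; norm_num
      rw [hc3] at hlt
      exact hlt.le
    have hlog8 : Real.log (8 * ((m : ℝ) + 1)) = Real.log 8 + Real.log ((m : ℝ) + 1) :=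
      Real.log_mul (by norm_num) (by positivity)
    have hlog8' : Real.log 8 = 3 * Real.log 2 := by
      rw [show (8 : ℝ) = 2 ^ 3 by norm_num, Real.log_pow]
      push_cast; ring
    calc (wordLength S (X ^ n) : ℝ) ≤ 16 * N + 22 := hword
      _ ≤ 200 / Real.log 2 * Real.log ((m : ℝ) + 1) := by
          rw [div_mul_eq_mul_div, le_div_iff₀ hlog2pos]
          nlinarith [hNreal, hlog8, hlog8', hL, hlog2pos]
      _ = 200 / Real.log 2 * Real.log (((|n| : ℤ) : ℝ) + 1) := by rw [hcast, ← Int.cast_abs]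
end

section
/- Let u = [[1,1],[0,1]] and v = [[0,1],[−1,0]] in SL(2,ℤ). For every integer n ≥ 1, the word length of uⁿ with respect to the generating set {u, v} is exactly n; that is, uⁿ is a product of n elements of {u, u⁻¹, v, v⁻¹} and cannot be written as a product of fewer than n such elements. -/
open scoped MatrixGroups

/-- The matrix `u = [[1,1],[0,1]]` in `SL(2, ℤ)`. -/
def u : SL(2, ℤ) := ⟨!![1, 1; 0, 1], by norm_num [Matrix.det_fin_two_of]⟩
/-- The matrix `v = [[0,1],[-1,0]]` in `SL(2, ℤ)`. -/
def v : SL(2, ℤ) := ⟨!![0, 1; -1, 0], by norm_num [Matrix.det_fin_two_of]⟩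

namespace SLWL

abbrev Irr : Type := {x : ℝ // Irrational x}

noncomputable def num (M : SL(2,ℤ)) (x : ℝ) : ℝ := (M.1 0 0 : ℝ) * x + (M.1 0 1 : ℝ)
noncomputable def den (M : SL(2,ℤ)) (x : ℝ) : ℝ := (M.1 1 0 : ℝ) * x + (M.1 1 1 : ℝ)

lemma detR (M : SL(2,ℤ)) :
    (M.1 0 0 : ℝ) * (M.1 1 1 : ℝ) - (M.1 0 1 : ℝ) * (M.1 1 0 : ℝ) = 1 := by
  have h := M.2
  rw [Matrix.det_fin_two] at h
  exact_mod_cast congrArg (fun z : ℤ => (z : ℝ)) h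

lemma den_ne (M : SL(2,ℤ)) {x : ℝ} (hx : Irrational x) : den M x ≠ 0 := by
  intro h
  rcases eq_or_ne (M.1 1 0) 0 with hc | hc
  · have hd : (M.1 1 1 : ℝ) = 0 := by simpa [den, hc] using h
    have := detR M
    rw [hd] at this
    have : (M.1 0 1 : ℝ) * (M.1 1 0 : ℝ) = -1 := by linarith
    rw [hc] at this
    norm_num at this
  · apply hx
    refine ⟨-(M.1 1 1 : ℚ) / (M.1 1 0 : ℚ), ?_⟩
    have hcR : (M.1 1 0 : ℝ) ≠ 0 := by exact_mod_cast hc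
    push_cast
    field_simp
    unfold den at h
    linarith

lemma irr_mob (M : SL(2,ℤ)) {x : ℝ} (hx : Irrational x) : Irrational (num M x / den M x) := by
  intro hmem
  obtain ⟨q, hq⟩ := hmem
  have hden := den_ne M hx
  have key : (num M x) = (q : ℝ) * den M x := by
    field_simp at hq
    linarith [hq]
  unfold num den at key
  rcases eq_or_ne ((M.1 0 0 : ℝ) - (q : ℝ) * (M.1 1 0 : ℝ)) 0 with h0 | h0
  · have hb : (M.1 0 1 : ℝ) = (q : ℝ) * (M.1 1 1 : ℝ) := by linear_combination key - x * h0
    have ha : (M.1 0 0 : ℝ) = (q : ℝ) * (M.1 1 0 : ℝ) := by linarith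
    have hdet := detR M
    have hcontr : (0 : ℝ) = 1 := by
      linear_combination hdet - (M.1 1 1 : ℝ) * ha + (M.1 1 0 : ℝ) * hb
    norm_num at hcontr
  · apply hx
    refine ⟨((q : ℚ) * (M.1 1 1 : ℚ) - (M.1 0 1 : ℚ)) / ((M.1 0 0 : ℚ) - (q : ℚ) * (M.1 1 0 : ℚ)), ?_⟩
    push_cast
    rw [div_eq_iff h0]
    linear_combination (-1 : ℝ) * key

noncomputable instance : MulAction SL(2,ℤ) Irr where
  smul M x := ⟨num M x.1 / den M x.1, irr_mob M x.2⟩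
  one_smul x := by
    apply Subtype.ext
    show num 1 x.1 / den 1 x.1 = x.1
    have h0 : ((1 : SL(2,ℤ)).1 : Matrix (Fin 2) (Fin 2) ℤ) = 1 := rfl
    simp [num, den, h0, Matrix.one_apply]
  mul_smul M N x := by
    apply Subtype.ext
    show num (M*N) x.1 / den (M*N) x.1 = num M (num N x.1 / den N x.1) / den M (num N x.1 / den N x.1)
    have hdN : den N x.1 ≠ 0 := den_ne N x.2
    have hp : num N x.1 / den N x.1 * den N x.1 = num N x.1 := div_mul_cancel₀ _ hdN
    have hMN : ((M*N).1 : Matrix (Fin 2) (Fin 2) ℤ) = M.1 * N.1 := rfl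
    have e1 : num M (num N x.1 / den N x.1) * den N x.1 = num (M*N) x.1 := by
      calc num M (num N x.1 / den N x.1) * den N x.1
          = (M.1 0 0 : ℝ) * (num N x.1 / den N x.1 * den N x.1) + (M.1 0 1 : ℝ) * den N x.1 := by
            unfold num; ring
        _ = (M.1 0 0 : ℝ) * num N x.1 + (M.1 0 1 : ℝ) * den N x.1 := by rw [hp]
        _ = num (M*N) x.1 := by
            unfold num den
            rw [hMN]
            simp only [Matrix.mul_apply, Fin.sum_univ_two]
            push_cast
            ring
    have e2 : den M (num N x.1 / den N x.1) * den N x.1 = den (M*N) x.1 := by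
      calc den M (num N x.1 / den N x.1) * den N x.1
          = (M.1 1 0 : ℝ) * (num N x.1 / den N x.1 * den N x.1) + (M.1 1 1 : ℝ) * den N x.1 := by
            unfold den; ring
        _ = (M.1 1 0 : ℝ) * num N x.1 + (M.1 1 1 : ℝ) * den N x.1 := by rw [hp]
        _ = den (M*N) x.1 := by
            unfold num den
            rw [hMN]
            simp only [Matrix.mul_apply, Fin.sum_univ_two]
            push_cast
            ring
    rw [← e1, ← e2, mul_div_mul_right _ _ hdN]

lemma smul_coe (M : SL(2,ℤ)) (x : Irr) : ((M • x : Irr) : ℝ) = num M x.1 / den M x.1 := rfl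

end SLWL

namespace SLWL

noncomputable def π : SL(2,ℤ) →* Equiv.Perm Irr := MulAction.toPermHom SL(2,ℤ) Irr

lemma π_apply (M : SL(2,ℤ)) (x : Irr) : π M x = M • x := rfl

-- matrix computations
lemma v_coe : (v : Matrix (Fin 2) (Fin 2) ℤ) = !![0,1;-1,0] := rfl
lemma u_coe : (u : Matrix (Fin 2) (Fin 2) ℤ) = !![1,1;0,1] := rfl

lemma vv_coe : (v : Matrix (Fin 2) (Fin 2) ℤ) * (v : Matrix (Fin 2) (Fin 2) ℤ) = !![-1,0;0,-1] := by
  rw [v_coe, Matrix.mul_fin_two]; norm_num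

lemma uv_coe : (u : Matrix (Fin 2) (Fin 2) ℤ) * (v : Matrix (Fin 2) (Fin 2) ℤ) = !![-1,1;-1,0] := by
  rw [u_coe, v_coe, Matrix.mul_fin_two]; norm_num

lemma π_vv : π (v * v) = 1 := by
  ext x
  show (((v*v) • x : Irr) : ℝ) = (x : ℝ)
  rw [smul_coe]
  simp [num, den, Matrix.SpecialLinearGroup.coe_mul, vv_coe]

lemma uv3_eq : (u*v)*(u*v)*(u*v) = 1 := by
  apply Subtype.ext
  show ((u*v).1 * (u*v).1 * (u*v).1 : Matrix (Fin 2) (Fin 2) ℤ) = (1 : Matrix (Fin 2) (Fin 2) ℤ)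
  rw [Matrix.SpecialLinearGroup.coe_mul, uv_coe, Matrix.mul_fin_two, Matrix.mul_fin_two]
  norm_num [Matrix.one_fin_two.symm]

lemma π_uv_pow3 : π (u*v) ^ 3 = 1 := by
  rw [← map_pow]
  have h3 : (u*v)^3 = 1 := by
    rw [pow_succ, pow_two, uv3_eq]
  rw [h3, map_one]

lemma π_v_pow2 : π v ^ 2 = 1 := by
  rw [← map_pow, sq, π_vv]

end SLWL

namespace SLWL

open Monoid

lemma pow_mod_eq {G : Type*} [Monoid G] (g : G) {n : ℕ} (h : g ^ n = 1) (m : ℕ) :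
    g ^ (m % n) = g ^ m := by
  conv_rhs => rw [← Nat.mod_add_div m n]
  rw [pow_add, pow_mul, h, one_pow, mul_one]

/-- A hom from `Multiplicative (ZMod n)` determined by an element of order dividing `n`. -/
def homOfOrder {G : Type*} [Group G] (n : ℕ) [NeZero n] (g : G) (h : g ^ n = 1) :
    Multiplicative (ZMod n) →* G where
  toFun x := g ^ (Multiplicative.toAdd x).val
  map_one' := by
    show g ^ (0 : ZMod n).val = 1
    rw [ZMod.val_zero, pow_zero]
  map_mul' x y := by
    show g ^ ((Multiplicative.toAdd x) + (Multiplicative.toAdd y)).val = _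
    rw [ZMod.val_add, pow_mod_eq g h, pow_add]

abbrev H : Bool → Type := fun b => Multiplicative (ZMod (cond b 3 2))

noncomputable def f : ∀ i, H i →* Equiv.Perm Irr := fun i =>
  match i with
  | false => homOfOrder 2 (π v) π_v_pow2
  | true => homOfOrder 3 (π (u*v)) π_uv_pow3

def X : Bool → Set Irr := fun b => cond b {x | 0 < (x : ℝ)} {x | (x : ℝ) < 0}

def elA : H false := Multiplicative.ofAdd (1 : ZMod 2)
def elB : H true := Multiplicative.ofAdd (1 : ZMod 3)

lemma f_elA : f false elA = π v := by
  show π v ^ (1 : ZMod 2).val = π v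
  rw [ZMod.val_one, pow_one]

lemma f_elB : f true elB = π (u*v) := by
  show π (u*v) ^ (1 : ZMod 3).val = π (u*v)
  rw [ZMod.val_one, pow_one]

lemma f_elB2 : f true (elB * elB) = π ((u*v)*(u*v)) := by
  show π (u*v) ^ ((1 : ZMod 3) + 1).val = _
  norm_num [map_mul]
  rw [show ((2 : ZMod 3)).val = 2 from rfl, sq]

lemma Hfalse_cases (h : H false) (hne : h ≠ 1) : h = elA := by
  have h2 : ∀ z : ZMod 2, z = 0 ∨ z = 1 := by decide
  rcases h2 (Multiplicative.toAdd h) with hz | hz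
  · exact absurd (Multiplicative.toAdd.injective hz) hne
  · exact Multiplicative.toAdd.injective hz

lemma Htrue_cases (h : H true) (hne : h ≠ 1) : h = elB ∨ h = elB * elB := by
  have h3 : ∀ z : ZMod 3, z = 0 ∨ z = 1 ∨ z = 2 := by decide
  rcases h3 (Multiplicative.toAdd h) with hz | hz | hz
  · exact absurd (Multiplicative.toAdd.injective hz) hne
  · exact Or.inl (Multiplicative.toAdd.injective hz)
  · exact Or.inr (Multiplicative.toAdd.injective (hz.trans (by decide)))

open Pointwise Cardinal in
lemma lift_f_injective : Function.Injective (Monoid.CoprodI.lift f) := by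
  apply Monoid.CoprodI.lift_injective_of_ping_pong f ?hcard X ?hne ?hdisj ?hpp
  case hcard =>
    right
    refine ⟨true, ?_⟩
    have : #(H true) = 3 := by
      show #(Multiplicative (ZMod 3)) = 3
      rw [Cardinal.mk_congr (Multiplicative.toAdd (α := ZMod 3))]
      simp [Cardinal.mk_fintype]
    rw [this]
  case hne =>
    intro i
    cases i
    · exact ⟨⟨-Real.sqrt 2, irrational_sqrt_two.neg⟩, by
        show -Real.sqrt 2 < 0
        have : (0:ℝ) < Real.sqrt 2 := by positivity
        linarith⟩
    · exact ⟨⟨Real.sqrt 2, irrational_sqrt_two⟩, by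
        show (0:ℝ) < Real.sqrt 2
        positivity⟩
  case hdisj =>
    intro i j hij
    have : ∀ x : Irr, x ∈ X false → x ∈ X true → False := by
      intro x h1 h2
      have h1' : (x:ℝ) < 0 := h1
      have h2' : (0:ℝ) < x := h2
      linarith
    cases i <;> cases j
    · exact absurd rfl hij
    · exact Set.disjoint_left.mpr (fun x hx hy => this x hx hy)
    · exact Set.disjoint_left.mpr (fun x hx hy => this x hy hx)
    · exact absurd rfl hij
  case hpp =>
    intro i j hij
    cases i <;> cases j <;> try exact absurd rfl hij
    · -- i = false, j = true : f false h maps positives to negatives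
      intro h hne
      have hh : h = elA := Hfalse_cases h hne
      subst hh
      rw [f_elA]
      rintro y ⟨x, hx, rfl⟩
      have hx' : (0:ℝ) < x := hx
      show ((v • x : Irr) : ℝ) < 0
      rw [smul_coe]
      rw [show num v x.1 = 1 by simp [num, v_coe], show den v x.1 = -x.1 by simp [den, v_coe]]
      apply div_neg_of_pos_of_neg <;> norm_num [hx']
    · -- i = true, j = false
      intro h hne
      have hh : h = elB ∨ h = elB * elB := Htrue_cases h hne
      rcases hh with rfl | rfl
      · rw [f_elB]
        rintro y ⟨x, hx, rfl⟩
        have hx' : (x:ℝ) < 0 := hx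
        show (0:ℝ) < (((u*v) • x : Irr) : ℝ)
        rw [smul_coe]
        rw [show num (u*v) x.1 = -x.1 + 1 by
              simp [num, Matrix.SpecialLinearGroup.coe_mul, uv_coe],
            show den (u*v) x.1 = -x.1 by
              simp [den, Matrix.SpecialLinearGroup.coe_mul, uv_coe]]
        apply div_pos <;> linarith
      · rw [f_elB2]
        rintro y ⟨x, hx, rfl⟩
        have hx' : (x:ℝ) < 0 := hx
        show (0:ℝ) < ((((u*v)*(u*v)) • x : Irr) : ℝ)
        rw [smul_coe]
        have hcoe : (((u*v)*(u*v) : SL(2,ℤ)) : Matrix (Fin 2) (Fin 2) ℤ) = !![0,-1;1,-1] := by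
          rw [Matrix.SpecialLinearGroup.coe_mul, Matrix.SpecialLinearGroup.coe_mul, uv_coe,
            Matrix.mul_fin_two]
          norm_num
        rw [show num ((u*v)*(u*v)) x.1 = -1 by simp [num, hcoe],
            show den ((u*v)*(u*v)) x.1 = x.1 - 1 by simp [den, hcoe]; ring]
        apply div_pos_of_neg_of_neg <;> linarith

end SLWL

namespace SLWL

open Monoid.CoprodI

noncomputable def len (g : Monoid.CoprodI H) : ℕ := (Word.equiv g).toList.length

lemma equiv_apply (g : Monoid.CoprodI H) : Word.equiv g = g • Word.empty := rfl

lemma equiv_mul (g h : Monoid.CoprodI H) : Word.equiv (g * h) = g • Word.equiv h := by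
  rw [equiv_apply, equiv_apply, mul_smul]

lemma len_one : len (1 : Monoid.CoprodI H) = 0 := by
  have : Word.equiv (1 : Monoid.CoprodI H) = Word.empty := by
    rw [equiv_apply, one_smul]
  rw [len, this]
  rfl

lemma rcons_length {i : Bool} (p : Word.Pair H i) :
    (Word.rcons p).toList.length ≤ p.tail.toList.length + 1 := by
  rw [Word.rcons]
  split_ifs
  · exact Nat.le_succ _
  · exact le_of_eq rfl

lemma equivPair_tail_length (i : Bool) (w : Word H) :
    (Word.equivPair i w).tail.toList.length ≤ w.toList.length := by
  have hw : Word.rcons (Word.equivPair i w) = w := (Word.equivPair i).symm_apply_apply w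
  conv_rhs => rw [← hw]
  rw [Word.rcons]
  split_ifs
  · exact le_refl _
  · exact Nat.le_succ _

lemma len_of_mul_le (i : Bool) (m : H i) (g : Monoid.CoprodI H) :
    len (Monoid.CoprodI.of m * g) ≤ len g + 1 := by
  rw [len, len, equiv_mul, Word.of_smul_def]
  refine le_trans (rcons_length _) (Nat.add_le_add_right ?_ 1)
  exact equivPair_tail_length i _

end SLWL

namespace SLWL

open Monoid.CoprodI

noncomputable def A : Monoid.CoprodI H := Monoid.CoprodI.of elA
noncomputable def B : Monoid.CoprodI H := Monoid.CoprodI.of elB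

lemma elA_ne_one : elA ≠ 1 := by decide
lemma elB_ne_one : elB ≠ 1 := by decide

lemma BA_word (n : ℕ) :
    (Word.equiv ((B*A)^n)).toList.length = 2*n ∧
      Word.fstIdx (Word.equiv ((B*A)^n)) ≠ some false := by
  induction n with
  | zero =>
    have h1 : Word.equiv ((B*A)^0) = Word.empty := by
      rw [pow_zero, equiv_apply, one_smul]
    rw [h1]
    exact ⟨rfl, by simp [Word.empty, Word.fstIdx]⟩
  | succ n ih =>
    obtain ⟨ihlen, ihfst⟩ := ih
    set w := Word.equiv ((B*A)^n) with hw
    have hA : A • w = Word.cons elA w ihfst elA_ne_one := (Word.cons_eq_smul).symm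
    have hfstA : Word.fstIdx (Word.cons elA w ihfst elA_ne_one) ≠ some true := by
      rw [Word.fstIdx_cons]
      simp
    have hB : B • (Word.cons elA w ihfst elA_ne_one) =
        Word.cons elB (Word.cons elA w ihfst elA_ne_one) hfstA elB_ne_one :=
      (Word.cons_eq_smul).symm
    have hstep : Word.equiv ((B*A)^(n+1)) =
        Word.cons elB (Word.cons elA w ihfst elA_ne_one) hfstA elB_ne_one := by
      rw [pow_succ', equiv_mul, ← hw, mul_smul, hA, hB]
    rw [hstep]
    constructor
    · show ((⟨true, elB⟩ : Σ i, H i) :: (⟨false, elA⟩ : Σ i, H i) :: w.toList).length = 2*(n+1)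
      simp only [List.length_cons, ihlen]
      ring
    · rw [Word.fstIdx_cons]
      simp

lemma len_BA_pow (n : ℕ) : len ((B*A)^n) = 2*n := (BA_word n).1

lemma lift_BA : Monoid.CoprodI.lift f (B*A) = π u := by
  rw [B, A, map_mul, Monoid.CoprodI.lift_of, Monoid.CoprodI.lift_of, f_elA, f_elB, ← map_mul,
    mul_assoc, map_mul, π_vv, mul_one]

end SLWL

namespace SLWL

open Monoid.CoprodI

lemma len_A_mul (g : Monoid.CoprodI H) : len (A * g) ≤ len g + 1 := len_of_mul_le false elA g
lemma len_B_mul (g : Monoid.CoprodI H) : len (B * g) ≤ len g + 1 := len_of_mul_le true elB g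
lemma len_Ainv_mul (g : Monoid.CoprodI H) : len (A⁻¹ * g) ≤ len g + 1 := by
  rw [A, ← map_inv]; exact len_of_mul_le false elA⁻¹ g
lemma len_Binv_mul (g : Monoid.CoprodI H) : len (B⁻¹ * g) ≤ len g + 1 := by
  rw [B, ← map_inv]; exact len_of_mul_le true elB⁻¹ g

lemma lift_A : Monoid.CoprodI.lift f A = π v := by
  rw [A, Monoid.CoprodI.lift_of, f_elA]

lemma letters_lemma (l : List SL(2,ℤ))
    (hl : ∀ x ∈ l, x ∈ ({u, v} : Set SL(2,ℤ)) ∪ ({u, v} : Set SL(2,ℤ))⁻¹) :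
    ∃ w : Monoid.CoprodI H, Monoid.CoprodI.lift f w = π l.prod ∧ len w ≤ 2 * l.length := by
  induction l with
  | nil => exact ⟨1, by simp, by simp [len_one]⟩
  | cons x t ih =>
    obtain ⟨w, hw, hlen⟩ := ih (fun y hy => hl y (List.mem_cons_of_mem x hy))
    have hx := hl x List.mem_cons_self
    have hx' : x = u ∨ x = v ∨ x = u⁻¹ ∨ x = v⁻¹ := by
      rcases hx with h | h
      · simp only [Set.mem_insert_iff, Set.mem_singleton_iff] at h
        tauto
      · rw [Set.mem_inv] at h
        simp only [Set.mem_insert_iff, Set.mem_singleton_iff] at h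
        rcases h with h | h
        · exact Or.inr (Or.inr (Or.inl (inv_eq_iff_eq_inv.mp h)))
        · exact Or.inr (Or.inr (Or.inr (inv_eq_iff_eq_inv.mp h)))
    have hprod : (x :: t).prod = x * t.prod := List.prod_cons
    have hlength : (x :: t).length = t.length + 1 := List.length_cons
    rcases hx' with rfl | rfl | rfl | rfl
    · refine ⟨B * A * w, ?_, ?_⟩
      · rw [map_mul, lift_BA, hw, hprod, map_mul]
      · rw [mul_assoc, hlength]
        calc len (B * (A * w)) ≤ len (A * w) + 1 := len_B_mul _
          _ ≤ (len w + 1) + 1 := Nat.add_le_add_right (len_A_mul _) 1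
          _ ≤ 2 * (t.length + 1) := by omega
    · refine ⟨A * w, ?_, ?_⟩
      · rw [map_mul, lift_A, hw, hprod, map_mul]
      · rw [hlength]
        calc len (A * w) ≤ len w + 1 := len_A_mul _
          _ ≤ 2 * (t.length + 1) := by omega
    · refine ⟨(B * A)⁻¹ * w, ?_, ?_⟩
      · rw [map_mul, map_inv, lift_BA, hw, hprod, map_mul, map_inv]
      · rw [mul_inv_rev, mul_assoc, hlength]
        calc len (A⁻¹ * (B⁻¹ * w)) ≤ len (B⁻¹ * w) + 1 := len_Ainv_mul _
          _ ≤ (len w + 1) + 1 := Nat.add_le_add_right (len_Binv_mul _) 1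
          _ ≤ 2 * (t.length + 1) := by omega
    · refine ⟨A⁻¹ * w, ?_, ?_⟩
      · rw [map_mul, map_inv, lift_A, hw, hprod, map_mul, map_inv]
      · rw [hlength]
        calc len (A⁻¹ * w) ≤ len w + 1 := len_Ainv_mul _
          _ ≤ 2 * (t.length + 1) := by omega

end SLWL

theorem wordLength_u_pow (n : ℕ) (hn : 1 ≤ n) : wordLength {u, v} (u ^ n) = n := by
  have hmem : n ∈ {k | ∃ l : List SL(2,ℤ),
      (∀ x ∈ l, x ∈ ({u, v} : Set SL(2,ℤ)) ∪ ({u, v} : Set SL(2,ℤ))⁻¹) ∧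
      l.length = k ∧ l.prod = u ^ n} := by
    refine ⟨List.replicate n u, ?_, List.length_replicate, List.prod_replicate n u⟩
    intro x hx
    rw [List.eq_of_mem_replicate hx]
    exact Or.inl (Set.mem_insert _ _)
  unfold wordLength
  apply le_antisymm
  · exact Nat.sInf_le hmem
  · apply le_csInf ⟨n, hmem⟩
    rintro k ⟨l, hl, rfl, hprod⟩
    obtain ⟨w, hw, hlen2⟩ := SLWL.letters_lemma l hl
    have hww : Monoid.CoprodI.lift SLWL.f w =
        Monoid.CoprodI.lift SLWL.f ((SLWL.B * SLWL.A) ^ n) := by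
      rw [hw, hprod, map_pow, map_pow, SLWL.lift_BA]
    have hweq := SLWL.lift_f_injective hww
    rw [hweq, SLWL.len_BA_pow] at hlen2
    omega
end

section
/- Let n ≥ 1 and let P⁽ⁿ⁾ be the set of symmetric, positive definite n×n real matrices of determinant 1. Then the function d_P(S₁,S₂) = log‖S₁⁻¹S₂‖ + log‖S₂⁻¹S₁‖ (operator norms) is a metric on P⁽ⁿ⁾: it is non-negative, symmetric, satisfies the triangle inequality, and d_P(S₁,S₂) = 0 if and only if S₁ = S₂. -/
set_option maxHeartbeats 1000000
set_option synthInstance.maxHeartbeats 200000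


open Matrix

/-- Membership in `P⁽ⁿ⁾`: symmetric, positive definite, determinant 1. -/
def memP (n : ℕ) (S : Matrix (Fin n) (Fin n) ℝ) : Prop :=
  S.IsSymm ∧ (∀ x : Fin n → ℝ, 0 ≤ x ⬝ᵥ S.mulVec x) ∧
    (∀ x : Fin n → ℝ, x ⬝ᵥ S.mulVec x = 0 → x = 0) ∧ S.det = 1

/-- The operator norm of an `n × n` real matrix with respect to the Euclidean norm. -/
noncomputable def opNorm {n : ℕ} (A : Matrix (Fin n) (Fin n) ℝ) : ℝ :=
  ‖Matrix.toEuclideanCLM (𝕜 := ℝ) A‖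

/-- The distance function on `P⁽ⁿ⁾`. -/
noncomputable def dP {n : ℕ} (S₁ S₂ : Matrix (Fin n) (Fin n) ℝ) : ℝ :=
  Real.log (opNorm (S₁⁻¹ * S₂)) + Real.log (opNorm (S₂⁻¹ * S₁))

lemma memP.posDef {n : ℕ} {S : Matrix (Fin n) (Fin n) ℝ} (h : memP n S) : S.PosDef := by
  obtain ⟨hs, h1, h2, _⟩ := h
  refine PosDef.of_dotProduct_mulVec_pos ?_ (fun x hx => ?_)
  · rwa [Matrix.IsHermitian, conjTranspose_eq_transpose_of_trivial]
  · have hnn := h1 x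
    rcases hnn.lt_or_eq with hlt | heq
    · simpa using hlt
    · exact absurd (h2 x heq.symm) hx

lemma memP.isUnitDet {n : ℕ} {S : Matrix (Fin n) (Fin n) ℝ} (h : memP n S) : IsUnit S.det :=
  h.2.2.2 ▸ isUnit_one

lemma opNorm_mul_le {n : ℕ} (A B : Matrix (Fin n) (Fin n) ℝ) :
    opNorm (A * B) ≤ opNorm A * opNorm B := by
  unfold opNorm
  rw [_root_.map_mul]
  exact norm_mul_le _ _

lemma opNorm_nonneg {n : ℕ} (A : Matrix (Fin n) (Fin n) ℝ) : 0 ≤ opNorm A :=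
  norm_nonneg _

lemma opNorm_one {n : ℕ} (hn : 1 ≤ n) : opNorm (1 : Matrix (Fin n) (Fin n) ℝ) = 1 := by
  haveI : Nonempty (Fin n) := ⟨⟨0, hn⟩⟩
  unfold opNorm
  rw [_root_.map_one]
  exact norm_one

lemma one_le_opNorm_mul {n : ℕ} (hn : 1 ≤ n) {A B : Matrix (Fin n) (Fin n) ℝ}
    (h : A * B = 1) : 1 ≤ opNorm A * opNorm B := by
  calc (1 : ℝ) = opNorm (A * B) := by rw [h, opNorm_one hn]
    _ ≤ opNorm A * opNorm B := opNorm_mul_le A B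

lemma opNorm_pos {n : ℕ} (hn : 1 ≤ n) {A B : Matrix (Fin n) (Fin n) ℝ}
    (h : A * B = 1) : 0 < opNorm A := by
  have h1 := one_le_opNorm_mul hn h
  have hB := opNorm_nonneg B
  nlinarith [opNorm_nonneg A]

theorem dP_is_metric (n : ℕ) (hn : 1 ≤ n) :
    (∀ S₁ S₂, memP n S₁ → memP n S₂ → 0 ≤ dP S₁ S₂) ∧
    (∀ S₁ S₂, memP n S₁ → memP n S₂ → dP S₁ S₂ = dP S₂ S₁) ∧
    (∀ S₁ S₂, memP n S₁ → memP n S₂ → (dP S₁ S₂ = 0 ↔ S₁ = S₂)) ∧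
    (∀ S₁ S₂ S₃, memP n S₁ → memP n S₂ → memP n S₃ →
      dP S₁ S₃ ≤ dP S₁ S₂ + dP S₂ S₃) := by
  -- key product identity
  have key : ∀ S₁ S₂ : Matrix (Fin n) (Fin n) ℝ, memP n S₁ → memP n S₂ →
      (S₁⁻¹ * S₂) * (S₂⁻¹ * S₁) = 1 := by
    intro S₁ S₂ h₁ h₂
    rw [mul_assoc, ← mul_assoc S₂, Matrix.mul_nonsing_inv _ h₂.isUnitDet, one_mul,
      Matrix.nonsing_inv_mul _ h₁.isUnitDet]
  have nonneg : ∀ S₁ S₂, memP n S₁ → memP n S₂ → 0 ≤ dP S₁ S₂ := by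
    intro S₁ S₂ h₁ h₂
    have hk := key S₁ S₂ h₁ h₂
    have hab := one_le_opNorm_mul hn hk
    have ha := opNorm_pos hn hk
    have hk' : (S₂⁻¹ * S₁) * (S₁⁻¹ * S₂) = 1 := key S₂ S₁ h₂ h₁
    have hb := opNorm_pos hn hk'
    have : 0 ≤ Real.log (opNorm (S₁⁻¹ * S₂) * opNorm (S₂⁻¹ * S₁)) := Real.log_nonneg hab
    rwa [Real.log_mul ha.ne' hb.ne'] at this
  refine ⟨nonneg, ?_, ?_, ?_⟩
  · intro S₁ S₂ _ _
    unfold dP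
    ring
  · intro S₁ S₂ h₁ h₂
    constructor
    · -- hard direction
      intro hd
      -- set up
      set A : Matrix (Fin n) (Fin n) ℝ := S₁⁻¹ * S₂ with hA
      set B : Matrix (Fin n) (Fin n) ℝ := S₂⁻¹ * S₁ with hB
      have hAB : A * B = 1 := key S₁ S₂ h₁ h₂
      have hBA : B * A = 1 := key S₂ S₁ h₂ h₁
      have ha := opNorm_pos hn hAB
      have hb := opNorm_pos hn hBA
      have hab1 : opNorm A * opNorm B = 1 := by
        have h1 := one_le_opNorm_mul hn hAB
        have hlog : Real.log (opNorm A * opNorm B) = 0 := by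
          rw [Real.log_mul ha.ne' hb.ne']; exact hd
        have := Real.exp_log (by positivity : (0:ℝ) < opNorm A * opNorm B)
        rw [hlog, Real.exp_zero] at this
        exact this.symm
      -- pass to continuous linear maps
      set T := Matrix.toEuclideanCLM (𝕜 := ℝ) A with hT
      set U := Matrix.toEuclideanCLM (𝕜 := ℝ) B with hU
      have hUT : U * T = 1 := by rw [hU, hT, ← _root_.map_mul, hBA, _root_.map_one]
      have hnormT : ∀ x : EuclideanSpace ℝ (Fin n), ‖T x‖ = ‖T‖ * ‖x‖ := by
        intro x
        refine le_antisymm (T.le_opNorm x) ?_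
        have hx : ‖x‖ ≤ ‖U‖ * ‖T x‖ := by
          have : U (T x) = x := by
            have := congrArg (fun f : EuclideanSpace ℝ (Fin n) →L[ℝ] _ => f x) hUT
            simpa using this
          calc ‖x‖ = ‖U (T x)‖ := by rw [this]
            _ ≤ ‖U‖ * ‖T x‖ := U.le_opNorm _
        have hTU : ‖T‖ * ‖U‖ = 1 := hab1
        nlinarith [norm_nonneg T, norm_nonneg U, norm_nonneg (T x), norm_nonneg x]
      -- inner products
      have hinner : ∀ x y : EuclideanSpace ℝ (Fin n),
          inner ℝ (T x) (T y) = (‖T‖ ^ 2 * inner ℝ x y : ℝ) := by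
        intro x y
        rw [real_inner_eq_norm_add_mul_self_sub_norm_mul_self_sub_norm_mul_self_div_two,
          real_inner_eq_norm_add_mul_self_sub_norm_mul_self_sub_norm_mul_self_div_two x y,
          ← map_add, hnormT, hnormT, hnormT]
        ring
      -- adjoint identity
      have hadj : star T * T = (‖T‖ ^ 2 : ℝ) • (1 : EuclideanSpace ℝ (Fin n) →L[ℝ] _) := by
        refine ContinuousLinearMap.ext fun y => ?_
        have hzero : ∀ x : EuclideanSpace ℝ (Fin n),
            (inner ℝ x ((star T * T) y - ((‖T‖ ^ 2 : ℝ) • (1 : EuclideanSpace ℝ (Fin n) →L[ℝ] _)) y) : ℝ) = 0 := by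
          intro x
          rw [inner_sub_right]
          have h1 : (inner ℝ x ((star T * T) y) : ℝ) = inner ℝ (T x) (T y) := by
            simp only [ContinuousLinearMap.mul_apply, ContinuousLinearMap.star_eq_adjoint]
            rw [ContinuousLinearMap.adjoint_inner_right]
          rw [h1, hinner]
          have h2 : ((‖T‖ ^ 2 : ℝ) • (1 : EuclideanSpace ℝ (Fin n) →L[ℝ] EuclideanSpace ℝ (Fin n))) y
              = (‖T‖ ^ 2 : ℝ) • y := by simp
          rw [h2, real_inner_smul_right, sub_self]
        have := hzero ((star T * T) y - ((‖T‖ ^ 2 : ℝ) • (1 : EuclideanSpace ℝ (Fin n) →L[ℝ] _)) y)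
        rw [inner_self_eq_zero] at this
        exact sub_eq_zero.mp this
      -- back to matrices
      have hmat : star A * A = (‖T‖ ^ 2 : ℝ) • (1 : Matrix (Fin n) (Fin n) ℝ) := by
        have h2 := congrArg (Matrix.toEuclideanCLM (𝕜 := ℝ) (n := Fin n)).symm hadj
        simpa [hT, _root_.map_mul, map_star, _root_.map_smul, _root_.map_one] using h2
      -- determinant computation: ‖T‖ = 1
      have hdetA : A.det = 1 := by
        rw [hA, Matrix.det_mul, Matrix.det_nonsing_inv, h₁.2.2.2, h₂.2.2.2]
        norm_num
      have hc : ‖T‖ ^ 2 = 1 := by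
        have hdet := congrArg Matrix.det hmat
        rw [Matrix.det_mul, Matrix.det_smul, Matrix.det_one, mul_one, hdetA, mul_one, Fintype.card_fin] at hdet
        have hstar : (star A).det = 1 := by
          have : star A = Aᵀ := by
            rw [Matrix.star_eq_conjTranspose, conjTranspose_eq_transpose_of_trivial]
          rw [this, Matrix.det_transpose, hdetA]
        rw [hstar] at hdet
        -- hdet : 1 = (‖T‖^2)^n ... check direction
        have hpos : (0:ℝ) < ‖T‖ ^ 2 := by
          have : (0:ℝ) < ‖T‖ := ha
          positivity
        rcases lt_trichotomy (‖T‖ ^ 2) 1 with hlt | heq | hgt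
        · exfalso
          have : (‖T‖ ^ 2) ^ (n : ℕ) < 1 := pow_lt_one₀ hpos.le hlt (by omega)
          rw [← hdet] at this; exact lt_irrefl _ this
        · exact heq
        · exfalso
          have : 1 < (‖T‖ ^ 2) ^ (n : ℕ) := one_lt_pow₀ hgt (by omega)
          rw [← hdet] at this; exact lt_irrefl _ this
      rw [hc, one_smul] at hmat
      -- star A = S₂ * S₁⁻¹
      have hstarA : star A = S₂ * S₁⁻¹ := by
        rw [Matrix.star_eq_conjTranspose, conjTranspose_eq_transpose_of_trivial, hA,
          Matrix.transpose_mul, Matrix.transpose_nonsing_inv, h₁.1, h₂.1]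
      rw [hstarA, hA] at hmat
      -- hmat : (S₂ * S₁⁻¹) * (S₁⁻¹ * S₂) = 1
      have hsq : S₁ * S₁ = S₂ * S₂ := by
        have h2 : S₁⁻¹ * S₁⁻¹ = S₂⁻¹ * S₂⁻¹ := by
          have := congrArg (fun M => S₂⁻¹ * M * S₂⁻¹) hmat
          rw [mul_one, ← mul_assoc, ← mul_assoc, ← mul_assoc,
            Matrix.nonsing_inv_mul _ h₂.isUnitDet, one_mul, mul_assoc _ S₂,
            Matrix.mul_nonsing_inv _ h₂.isUnitDet, mul_one] at this
          exact this
        have h3 : (S₁ * S₁)⁻¹ = (S₂ * S₂)⁻¹ := by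
          rw [Matrix.mul_inv_rev, Matrix.mul_inv_rev, h2]
        have hu1 : IsUnit (S₁ * S₁).det := by
          rw [Matrix.det_mul]; exact (h₁.isUnitDet).mul h₁.isUnitDet
        have hu2 : IsUnit (S₂ * S₂).det := by
          rw [Matrix.det_mul]; exact (h₂.isUnitDet).mul h₂.isUnitDet
        have h4 := congrArg (fun M : Matrix (Fin n) (Fin n) ℝ => M⁻¹) h3
        simpa only [Matrix.nonsing_inv_nonsing_inv _ hu1, Matrix.nonsing_inv_nonsing_inv _ hu2]
          using h4
      have hP₁ : (S₁).PosSemidef := h₁.posDef.posSemidef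
      have hP₂ : (S₂).PosSemidef := h₂.posDef.posSemidef
      open scoped MatrixOrder in exact (CFC.sq_eq_sq_iff S₁ S₂ hP₁.nonneg hP₂.nonneg).mp (by rw [pow_two, pow_two, hsq])
    · rintro rfl
      unfold dP
      rw [Matrix.nonsing_inv_mul _ h₁.isUnitDet, opNorm_one hn, Real.log_one, add_zero]
  · intro S₁ S₂ S₃ h₁ h₂ h₃
    have hfac : ∀ X Y Z : Matrix (Fin n) (Fin n) ℝ, memP n X → memP n Y → memP n Z →
        Real.log (opNorm (X⁻¹ * Z)) ≤ Real.log (opNorm (X⁻¹ * Y)) + Real.log (opNorm (Y⁻¹ * Z)) := by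
      intro X Y Z hX hY hZ
      have hprod : X⁻¹ * Z = (X⁻¹ * Y) * (Y⁻¹ * Z) := by
        rw [mul_assoc, ← mul_assoc Y, Matrix.mul_nonsing_inv _ hY.isUnitDet, one_mul]
      have h1 : (X⁻¹ * Z) * (Z⁻¹ * X) = 1 := key X Z hX hZ
      have hpos1 := opNorm_pos hn h1
      have hpos2 := opNorm_pos hn (key X Y hX hY)
      have hpos3 := opNorm_pos hn (key Y Z hY hZ)
      calc Real.log (opNorm (X⁻¹ * Z)) ≤ Real.log (opNorm (X⁻¹ * Y) * opNorm (Y⁻¹ * Z)) := by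
            apply Real.log_le_log hpos1
            rw [hprod]; exact opNorm_mul_le _ _
        _ = _ := Real.log_mul hpos2.ne' hpos3.ne'
    have t1 := hfac S₁ S₂ S₃ h₁ h₂ h₃
    have t2 := hfac S₃ S₂ S₁ h₃ h₂ h₁
    unfold dP
    linarith
end

section
/- Let X be a proper metric space (closed balls are compact) which is geodesic (for all x, y ∈ X there is an isometric embedding γ : [0, dist(x,y)] → X with γ(0) = x and γ(dist(x,y)) = y). Let Γ be a group acting on X by isometries, and let p₀ ∈ X. Assume: (i) the action is cocompact, i.e. there is a compact set D ⊆ X with X = ⋃_{γ ∈ Γ} γ·D; (ii) for every r > 0 the set {γ ∈ Γ : dist(p₀, γ·p₀) ≤ r} is finite; (iii) the stabiliser of p₀ in Γ is trivial. Then there exist a finite subset S of Γ generating Γ and a constant C ≥ 1 such that for all γ ∈ Γ: (1/C)·dist(p₀, γ·p₀) ≤ ℓ_S(γ) ≤ C·dist(p₀, γ·p₀) whenever γ ≠ 1, where ℓ_S(γ) is the word length of γ with respect to S. In other words, the geometric distance function and the word distance function on Γ are Lipschitz equivalent. -/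
theorem word_equiv_geometric_of_cocompact
    {X : Type*} [MetricSpace X] [ProperSpace X]
    (hgeo : ∀ x y : X, ∃ γ : ℝ → X, γ 0 = x ∧ γ (dist x y) = y ∧
      ∀ s ∈ Set.Icc (0 : ℝ) (dist x y), ∀ t ∈ Set.Icc (0 : ℝ) (dist x y),
        dist (γ s) (γ t) = |s - t|)
    {Γ : Type*} [Group Γ] [MulAction Γ X]
    (hisom : ∀ (γ : Γ) (x y : X), dist (γ • x) (γ • y) = dist x y)
    (p₀ : X)
    (hcocompact : ∃ D : Set X, IsCompact D ∧ ∀ x : X, ∃ γ : Γ, ∃ d ∈ D, x = γ • d)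
    (hdiscrete : ∀ r : ℝ, 0 < r → {γ : Γ | dist p₀ (γ • p₀) ≤ r}.Finite)
    (hfree : ∀ γ : Γ, γ • p₀ = p₀ → γ = 1) :
    ∃ S : Set Γ, S.Finite ∧ Subgroup.closure S = ⊤ ∧
      ∃ C : ℝ, 1 ≤ C ∧ ∀ γ : Γ, γ ≠ 1 →
        (1 / C) * dist p₀ (γ • p₀) ≤ (wordLength S γ : ℝ) ∧
        (wordLength S γ : ℝ) ≤ C * dist p₀ (γ • p₀) := by
  classical
  obtain ⟨D, hDc, hDcov⟩ := hcocompact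
  obtain ⟨r, hr⟩ := hDc.isBounded.subset_closedBall p₀
  set R : ℝ := max r 1 with hRdef
  have hR1 : (1:ℝ) ≤ R := le_max_right _ _
  have hDR : D ⊆ Metric.closedBall p₀ R :=
    hr.trans (Metric.closedBall_subset_closedBall (le_max_left _ _))
  have hnear : ∀ x : X, ∃ γ : Γ, dist x (γ • p₀) ≤ R := by
    intro x
    obtain ⟨γ, d, hd, rfl⟩ := hDcov x
    refine ⟨γ, ?_⟩
    rw [hisom]
    have := hDR hd
    rwa [Metric.mem_closedBall] at this
  set S : Set Γ := {γ : Γ | dist p₀ (γ • p₀) ≤ 2*R+1} with hSdef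
  have hSfin : S.Finite := hdiscrete (2*R+1) (by linarith)
  -- distance of inverse / product formulas
  have hdinv : ∀ γ : Γ, dist p₀ (γ⁻¹ • p₀) = dist p₀ (γ • p₀) := by
    intro γ
    conv_rhs => rw [← hisom γ⁻¹, smul_smul, inv_mul_cancel, one_smul, dist_comm]
  have hdmul : ∀ γ δ : Γ, dist (γ • p₀) (δ • p₀) = dist p₀ ((γ⁻¹ * δ) • p₀) := by
    intro γ δ
    rw [← hisom γ p₀ ((γ⁻¹ * δ) • p₀), smul_smul, mul_inv_cancel_left]
  -- key lemma: every element at distance ≤ n is a product of ≤ n elements of S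
  have key : ∀ n : ℕ, ∀ γ : Γ, dist p₀ (γ • p₀) ≤ n →
      ∃ l : List Γ, (∀ x ∈ l, x ∈ S) ∧ l.length ≤ n ∧ l.prod = γ := by
    intro n
    induction n with
    | zero =>
      intro γ h
      have h0 : dist p₀ (γ • p₀) = 0 := le_antisymm (by simpa using h) dist_nonneg
      have hγ : γ = 1 := hfree γ (by rw [← dist_eq_zero]; rw [dist_comm]; exact h0)
      exact ⟨[], by simp, by simp, by simp [hγ]⟩
    | succ n ih =>
      intro γ h
      by_cases hc : dist p₀ (γ • p₀) ≤ 2*R+1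
      · exact ⟨[γ], by simpa [hSdef] using hc, by simp, by simp⟩
      · push_neg at hc
        set L := dist p₀ (γ • p₀) with hL
        obtain ⟨g, hg0, hgL, hgiso⟩ := hgeo p₀ (γ • p₀)
        have hLR : R + 1 ≤ L := by linarith
        have hmem : L - (R+1) ∈ Set.Icc (0:ℝ) L := ⟨by linarith, by linarith⟩
        have h0mem : (0:ℝ) ∈ Set.Icc (0:ℝ) L := ⟨le_refl _, by linarith⟩
        have hLmem : L ∈ Set.Icc (0:ℝ) L := ⟨by linarith, le_refl _⟩
        obtain ⟨γ', hγ'⟩ := hnear (g (L - (R+1)))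
        have hd1 : dist p₀ (g (L - (R+1))) = L - (R+1) := by
          have := hgiso 0 h0mem (L - (R+1)) hmem
          rw [hg0] at this
          rw [this]
          rw [abs_of_nonpos (by linarith)]
          ring
        have hd2 : dist (g (L - (R+1))) (γ • p₀) = R + 1 := by
          have := hgiso (L - (R+1)) hmem L hLmem
          rw [hgL] at this
          rw [this, abs_of_nonpos (by linarith)]
          ring
        have h1 : dist p₀ (γ' • p₀) ≤ (n : ℝ) := by
          have := dist_triangle p₀ (g (L - (R+1))) (γ' • p₀)
          have hn : (L : ℝ) ≤ (n : ℝ) + 1 := by push_cast at h ⊢; linarith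
          nlinarith [hγ']
        have h2 : (γ'⁻¹ * γ) ∈ S := by
          have hdd : dist (γ' • p₀) (γ • p₀) ≤ 2*R+1 := by
            have := dist_triangle (γ' • p₀) (g (L - (R+1))) (γ • p₀)
            rw [hd2] at this
            rw [dist_comm (γ' • p₀) (g (L - (R+1)))] at this
            linarith [hγ']
          rw [hSdef]
          simpa [← hdmul] using hdd
        obtain ⟨l, hl, hlen, hprod⟩ := ih γ' h1
        refine ⟨l ++ [γ'⁻¹ * γ], ?_, ?_, ?_⟩
        · intro x hx
          rcases List.mem_append.1 hx with hx | hx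
          · exact hl x hx
          · simpa using (by simpa using hx : x = γ'⁻¹ * γ) ▸ h2
        · simp only [List.length_append, List.length_singleton]
          omega
        · rw [List.prod_append, hprod]
          simp
  -- nonemptiness of the wordLength defining set, and upper bound
  have hrep : ∀ γ : Γ, ∃ l : List Γ, (∀ x ∈ l, x ∈ S) ∧
      (l.length : ℝ) ≤ dist p₀ (γ • p₀) + 1 ∧ l.prod = γ := by
    intro γ
    obtain ⟨l, hl, hlen, hprod⟩ := key ⌈dist p₀ (γ • p₀)⌉₊ γ (Nat.le_ceil _)
    refine ⟨l, hl, ?_, hprod⟩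
    calc (l.length : ℝ) ≤ (⌈dist p₀ (γ • p₀)⌉₊ : ℝ) := by exact_mod_cast hlen
      _ ≤ dist p₀ (γ • p₀) + 1 := le_of_lt (Nat.ceil_lt_add_one dist_nonneg)
  -- closure S = ⊤
  have hclosure : Subgroup.closure S = ⊤ := by
    rw [eq_top_iff]
    intro γ _
    obtain ⟨l, hl, _, hprod⟩ := hrep γ
    rw [← hprod]
    exact list_prod_mem (fun x hx => Subgroup.subset_closure (hl x hx))
  -- any single generator moves p₀ by at most 2R+1
  have hgen : ∀ x : Γ, x ∈ S ∪ S⁻¹ → dist p₀ (x • p₀) ≤ 2*R+1 := by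
    rintro x (hx | hx)
    · exact hx
    · rw [← hdinv]
      exact hx
  -- product bound
  have listbound : ∀ l : List Γ, (∀ x ∈ l, x ∈ S ∪ S⁻¹) →
      dist p₀ (l.prod • p₀) ≤ (2*R+1) * l.length := by
    intro l
    induction l with
    | nil => simp
    | cons a l ih =>
      intro hal
      have ha := hgen a (hal a List.mem_cons_self)
      have hl := ih (fun x hx => hal x (List.mem_cons_of_mem a hx))
      have htri := dist_triangle p₀ (a • p₀) ((a :: l).prod • p₀)
      have : dist (a • p₀) ((a :: l).prod • p₀) = dist p₀ (l.prod • p₀) := by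
        rw [List.prod_cons, mul_smul, hisom]
      rw [this] at htri
      simp only [List.length_cons]
      push_cast
      nlinarith
  -- the infimum is attained
  have hattain : ∀ γ : Γ, ∃ l : List Γ, (∀ x ∈ l, x ∈ S ∪ S⁻¹) ∧
      l.length = wordLength S γ ∧ l.prod = γ := by
    intro γ
    obtain ⟨l, hl, _, hprod⟩ := hrep γ
    have hne : {n | ∃ l : List Γ, (∀ x ∈ l, x ∈ S ∪ S⁻¹) ∧ l.length = n ∧ l.prod = γ}.Nonempty :=
      ⟨l.length, l, fun x hx => Or.inl (hl x hx), rfl, hprod⟩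
    exact Nat.sInf_mem hne
  have wl_le : ∀ γ : Γ, (wordLength S γ : ℝ) ≤ dist p₀ (γ • p₀) + 1 := by
    intro γ
    obtain ⟨l, hl, hlen, hprod⟩ := hrep γ
    have : wordLength S γ ≤ l.length :=
      Nat.sInf_le ⟨l, fun x hx => Or.inl (hl x hx), rfl, hprod⟩
    calc (wordLength S γ : ℝ) ≤ (l.length : ℝ) := by exact_mod_cast this
      _ ≤ _ := hlen
  have dist_le_wl : ∀ γ : Γ, dist p₀ (γ • p₀) ≤ (2*R+1) * (wordLength S γ : ℝ) := by
    intro γ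
    obtain ⟨l, hl, hlen, hprod⟩ := hattain γ
    have := listbound l hl
    rw [hprod, hlen] at this
    exact this
  -- the lower distance bound ε
  have hF : {γ : Γ | dist p₀ (γ • p₀) ≤ 1}.Finite := hdiscrete 1 one_pos
  set F : Finset Γ := hF.toFinset with hFdef
  set T : Finset ℝ := insert (1:ℝ) ((F.erase 1).image (fun γ => dist p₀ (γ • p₀))) with hTdef
  have hTne : T.Nonempty := ⟨1, Finset.mem_insert_self _ _⟩
  set ε : ℝ := T.min' hTne with hεdef
  have hTpos : ∀ a ∈ T, 0 < a := by
    intro a ha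
    rw [hTdef, Finset.mem_insert] at ha
    rcases ha with rfl | ha
    · exact one_pos
    · obtain ⟨γ, hγ, rfl⟩ := Finset.mem_image.1 ha
      have hγ1 : γ ≠ 1 := (Finset.mem_erase.1 hγ).1
      rcases lt_or_eq_of_le (dist_nonneg (x := p₀) (y := γ • p₀)) with h | h
      · exact h
      · exact absurd (hfree γ (by rw [← dist_eq_zero, dist_comm]; exact h.symm)) hγ1
  have hεpos : 0 < ε := hTpos ε (T.min'_mem hTne)
  have hε1 : ε ≤ 1 := T.min'_le 1 (Finset.mem_insert_self _ _)
  have hεle : ∀ γ : Γ, γ ≠ 1 → ε ≤ dist p₀ (γ • p₀) := by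
    intro γ hγ
    by_cases h : dist p₀ (γ • p₀) ≤ 1
    · refine T.min'_le _ ?_
      rw [hTdef]
      refine Finset.mem_insert_of_mem (Finset.mem_image.2 ⟨γ, ?_, rfl⟩)
      exact Finset.mem_erase.2 ⟨hγ, by rw [hFdef, Set.Finite.mem_toFinset]; exact h⟩
    · push_neg at h
      linarith
  -- final constant
  refine ⟨S, hSfin, hclosure, max (2*R+1) (1 + 1/ε), ?_, ?_⟩
  · exact le_trans (by linarith) (le_max_left _ _)
  · intro γ hγ
    set C : ℝ := max (2*R+1) (1 + 1/ε) with hCdef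
    have hC1 : (1:ℝ) ≤ C := le_trans (by linarith) (le_max_left _ _)
    have hC0 : (0:ℝ) < C := by linarith
    constructor
    · have h1 : dist p₀ (γ • p₀) ≤ C * (wordLength S γ : ℝ) := by
        refine le_trans (dist_le_wl γ) ?_
        exact mul_le_mul_of_nonneg_right (le_max_left _ _) (Nat.cast_nonneg _)
      calc (1/C) * dist p₀ (γ • p₀) ≤ (1/C) * (C * (wordLength S γ : ℝ)) := by
            apply mul_le_mul_of_nonneg_left h1
            positivity
        _ = (wordLength S γ : ℝ) := by field_simp
    · have hL : ε ≤ dist p₀ (γ • p₀) := hεle γ hγ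
      have h1 : (wordLength S γ : ℝ) ≤ dist p₀ (γ • p₀) + 1 := wl_le γ
      have h2 : dist p₀ (γ • p₀) + 1 ≤ (1 + 1/ε) * dist p₀ (γ • p₀) := by
        have : (1:ℝ) ≤ (1/ε) * dist p₀ (γ • p₀) := by
          rw [one_div, ← inv_mul_cancel₀ (ne_of_gt hεpos)]
          exact mul_le_mul_of_nonneg_left hL (by positivity)
        nlinarith
      have h3 : (1 + 1/ε) * dist p₀ (γ • p₀) ≤ C * dist p₀ (γ • p₀) :=
        mul_le_mul_of_nonneg_right (le_max_right _ _) dist_nonneg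
      linarith
end

section
/- Let t > 1 and let p₀ = t·i ∈ ℍ. Then the Dirichlet domain of the modular group with centre p₀ equals the interior of the standard fundamental triangle: {z ∈ ℍ : dist_ℍ(z, p₀) < dist_ℍ(z, γ·p₀) for every γ ∈ SL(2,ℤ) with γ ≠ I and γ ≠ −I} = {z ∈ ℍ : |Re z| < 1/2 and |z| > 1}. -/
open scoped MatrixGroups
open UpperHalfPlane Complex


lemma int_cast_sq_cases (n : ℤ) : (n:ℝ) = 0 ∨ (n:ℝ)^2 = 1 ∨ 4 ≤ (n:ℝ)^2 := by
  have h : n = 0 ∨ n^2 = 1 ∨ 4 ≤ n^2 := by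
    rcases (by omega : n ≤ -2 ∨ n = -1 ∨ n = 0 ∨ n = 1 ∨ 2 ≤ n) with h|h|h|h|h
    · right; right; nlinarith
    · right; left; rw [h]; ring
    · left; exact h
    · right; left; rw [h]; ring
    · right; right; nlinarith
  rcases h with h|h|h
  · left; exact_mod_cast h
  · right; left; exact_mod_cast h
  · right; right; exact_mod_cast h

set_option maxHeartbeats 1000000 in
lemma key_ineq (t x y P Q R S : ℝ) (ht : 1 < t) (hx : x^2 < 1/4) (hn : 1 < x^2 + y^2)
    (hP : P = 0 ∨ P^2 = 1 ∨ 4 ≤ P^2) (hQ : Q = 0 ∨ Q^2 = 1 ∨ 4 ≤ Q^2)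
    (hR : R = 0 ∨ R^2 = 1 ∨ 4 ≤ R^2) (hS : S = 0 ∨ S^2 = 1 ∨ 4 ≤ S^2)
    (hdet : P*S - Q*R = -1) (hnt : ¬(Q = 0 ∧ R = 0)) :
    x^2 + y^2 + t^2 < (P*x+Q)^2 + P^2*y^2 + t^2*((R*x+S)^2 + R^2*y^2) := by
  have norm1 : ∀ a : ℝ, (a = 0 ∨ a^2 = 1 ∨ 4 ≤ a^2) → (a = 0 ∨ 1 ≤ a^2) := by
    rintro a (h|h|h)
    exacts [Or.inl h, Or.inr (by linarith), Or.inr (by linarith)]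
  have hQ1 := norm1 Q hQ
  have hS1 := norm1 S hS
  have hP1 := norm1 P hP
  rcases hR with hR0 | hRne
  · -- R = 0 : PS = -1, Q ≠ 0
    subst hR0
    have hQne : Q ≠ 0 := fun h => hnt ⟨h, rfl⟩
    have hQsq : 1 ≤ Q^2 := hQ1.resolve_left hQne
    have hPS : P * S = -1 := by linarith [hdet]
    have hP2 : 1 ≤ P^2 := by
      rcases hP1 with h|h
      · exfalso; rw [h] at hPS; simp at hPS
      · exact h
    have hS2 : 1 ≤ S^2 := by
      rcases hS1 with h|h
      · exfalso; rw [h] at hPS; simp at hPS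
      · exact h
    have hPSsq : P^2 * S^2 = 1 := by linear_combination (P*S-1) * hPS
    have hPeq : P^2 = 1 := by nlinarith
    have hSeq : S^2 = 1 := by nlinarith
    have hu2 : (2*P*Q*x)^2 < Q^4 := by nlinarith [mul_pos (by linarith : (0:ℝ) < 1/4 - x^2) (by linarith : (0:ℝ) < Q^2), mul_nonneg (by positivity : (0:ℝ) ≤ Q^2) (by linarith : (0:ℝ) ≤ Q^2 - 1)]
    have haux : 0 < 2*P*Q*x + Q^2 := by nlinarith [hu2, sq_nonneg Q]
    nlinarith [haux, hPeq, hSeq, sq_nonneg x, sq_nonneg y]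
  · -- R ≠ 0
    have hRsq : 1 ≤ R^2 := by rcases hRne with h|h <;> linarith
    have hC2 : x^2 + y^2 ≤ (R*x+S)^2 + R^2*y^2 := by
      rcases hRne with hR1 | hR4
      · -- R² = 1 : need 0 ≤ 2RSx + S²
        rcases hS1 with hS0 | hSsq
        · subst hS0; nlinarith [hR1]
        · have hu2 : (2*R*S*x)^2 < S^4 := by
            nlinarith [mul_pos (by linarith : (0:ℝ) < 1/4 - x^2) (by linarith : (0:ℝ) < S^2), mul_nonneg (by positivity : (0:ℝ) ≤ S^2) (by linarith : (0:ℝ) ≤ S^2 - 1)]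
          have : 0 ≤ 2*R*S*x + S^2 := by nlinarith [hu2, sq_nonneg S]
          nlinarith [this, hR1]
      · -- R² ≥ 4
        rcases hS1 with hS0 | hSsq
        · subst hS0
          nlinarith [mul_nonneg (by linarith : (0:ℝ) ≤ R^2 - 1) (by linarith : (0:ℝ) ≤ x^2 + y^2 - 1)]
        · nlinarith [sq_nonneg (R + 2*S*x), mul_nonneg (by linarith : (0:ℝ) ≤ R^2 - 1) (by linarith : (0:ℝ) ≤ x^2 + y^2 - 1), mul_nonneg (by linarith : (0:ℝ) ≤ S^2 - 1) (by linarith : (0:ℝ) ≤ 1 - 4*x^2)]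
    rcases hP1 with hP0 | hPsq
    · -- P = 0 : QR = 1 so Q² = 1
      subst hP0
      have hQR : Q * R = 1 := by linarith [hdet]
      have hQsq : 1 ≤ Q^2 := by
        rcases hQ1 with h|h
        · exfalso; rw [h] at hQR; simp at hQR
        · exact h
      have hQRsq : Q^2 * R^2 = 1 := by linear_combination (Q*R+1) * hQR
      have hQeq : Q^2 = 1 := by
        have h1 : Q^2 * 1 ≤ Q^2 * R^2 := by
          apply mul_le_mul_of_nonneg_left hRsq (by positivity)
        have h2 : Q^2 ≤ 1 := by rw [hQRsq] at h1; linarith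
        linarith
      have ht2 : 0 < t^2 - 1 := by nlinarith
      nlinarith [hC2, mul_pos ht2 (by linarith : (0:ℝ) < x^2+y^2-1), hQeq, mul_le_mul_of_nonneg_left hC2 (by positivity : (0:ℝ) ≤ t^2)]
    · -- P ≠ 0
      have hC1 : 1 < (P*x+Q)^2 + P^2*y^2 := by
        rcases hQ1 with hQ0 | hQsq
        · subst hQ0
          nlinarith [mul_nonneg (by linarith : (0:ℝ) ≤ P^2 - 1) (by linarith : (0:ℝ) ≤ x^2 + y^2 - 1), mul_pos (by linarith : (0:ℝ) < P^2) (by linarith : (0:ℝ) < x^2+y^2-1)]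
        · nlinarith [sq_nonneg (P + 2*Q*x), mul_nonneg (by linarith : (0:ℝ) ≤ P^2 - 1) (by linarith : (0:ℝ) ≤ x^2 + y^2 - 1), mul_nonneg (by linarith : (0:ℝ) ≤ Q^2 - 1) (by linarith : (0:ℝ) ≤ 1 - 4*x^2), mul_pos (by linarith : (0:ℝ) < P^2) (by linarith : (0:ℝ) < x^2+y^2-1)]
      have ht2 : 0 < t^2 - 1 := by nlinarith
      nlinarith [hC1, hC2, mul_pos ht2 (by linarith : (0:ℝ) < x^2+y^2-1), mul_le_mul_of_nonneg_left hC2 (by positivity : (0:ℝ) ≤ t^2)]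



lemma aux_div (A B K t y : ℝ) (ht : 0 < t) (hy : 0 < y) (hK : 0 < K) :
    A / (2*y*t) < (B/K) / (2*y*(t/K)) ↔ A < B := by
  have h : (B/K) / (2*y*(t/K)) = B / (2*y*t) := by
    field_simp
  rw [h, div_lt_div_iff_of_pos_right (by positivity : (0:ℝ) < 2*y*t)]

lemma dist_lt_dist_iff (t : ℝ) (ht : 0 < t) (p₀ z w : ℍ) (hp₀ : (p₀:ℂ) = t*Complex.I)
    (a b c d : ℝ) (hdet : a*d - b*c = 1)
    (hw : (w:ℂ) = ((a:ℂ) * p₀ + b) / ((c:ℂ) * p₀ + d)) :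
    dist z p₀ < dist z w ↔
      (z:ℂ).re^2 + (z:ℂ).im^2 + t^2 <
        (d*(z:ℂ).re - b)^2 + d^2*(z:ℂ).im^2 + t^2*((c*(z:ℂ).re - a)^2 + c^2*(z:ℂ).im^2) := by
  simp only [UpperHalfPlane.coe_re, UpperHalfPlane.coe_im]
  set x := z.re with hxdef
  set y := z.im with hydef
  have hy : 0 < y := z.im_pos
  have hcd : ¬(c = 0 ∧ d = 0) := by
    rintro ⟨rfl, rfl⟩
    norm_num at hdet
  have hK : 0 < c^2*t^2 + d^2 := by
    rcases eq_or_ne d 0 with rfl|hd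
    · have hc : c ≠ 0 := fun h => hcd ⟨h, rfl⟩
      have : 0 < c^2*t^2 := by positivity
      linarith [sq_nonneg (0:ℝ)]
    · positivity
  have hK' : c^2*t^2 + d^2 ≠ 0 := ne_of_gt hK
  have hnormden : Complex.normSq ((c:ℂ)*(p₀:ℂ) + d) = c^2*t^2 + d^2 := by
    rw [hp₀]
    simp [Complex.normSq_apply]
    ring
  have hden : ((c:ℂ)*(p₀:ℂ) + d) ≠ 0 := by
    intro h
    rw [h, map_zero] at hnormden
    exact hK' hnormden.symm
  have hp₀im : p₀.im = t := by
    rw [UpperHalfPlane.im, hp₀]; simp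
  have hwim : w.im = t / (c^2*t^2 + d^2) := by
    rw [UpperHalfPlane.im, hw, hp₀, Complex.div_im]
    simp [Complex.normSq_apply]
    rw [div_sub_div_same, div_eq_div_iff (by intro h; apply hK'; nlinarith [h]) hK']
    linear_combination (t*(c^2*t^2+d^2)) * hdet
  have hsub : (z:ℂ) - (w:ℂ) = ((z:ℂ)*((c:ℂ)*(p₀:ℂ)+d) - ((a:ℂ)*(p₀:ℂ)+b))/((c:ℂ)*(p₀:ℂ)+d) := by
    rw [hw, sub_div, mul_div_cancel_right₀ _ hden]
  have h1 : Complex.normSq ((z:ℂ) - (p₀:ℂ)) = x^2 + y^2 + t^2 - 2*t*y := by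
    rw [hp₀]
    simp [Complex.normSq_apply]
    ring
  have h2 : Complex.normSq ((z:ℂ)*((c:ℂ)*(p₀:ℂ)+d) - ((a:ℂ)*(p₀:ℂ)+b))
      = (d*x-b)^2 + d^2*y^2 + t^2*((c*x-a)^2+c^2*y^2) - 2*t*y := by
    rw [hp₀]
    simp [Complex.normSq_apply]
    linear_combination (-2*t*y) * hdet
  have h0 : dist z p₀ < dist z w ↔ Real.cosh (dist z p₀) < Real.cosh (dist z w) := by
    rw [Real.cosh_lt_cosh, _root_.abs_of_nonneg dist_nonneg, _root_.abs_of_nonneg dist_nonneg]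
  rw [h0, UpperHalfPlane.cosh_dist, UpperHalfPlane.cosh_dist, add_lt_add_iff_left]
  have e1 : dist (z:ℂ) (p₀:ℂ) ^2 = x^2 + y^2 + t^2 - 2*t*y := by
    rw [Complex.dist_eq, Complex.sq_norm, h1]
  have e2 : dist (z:ℂ) (w:ℂ) ^2 = ((d*x-b)^2 + d^2*y^2 + t^2*((c*x-a)^2+c^2*y^2) - 2*t*y) / (c^2*t^2 + d^2) := by
    rw [Complex.dist_eq, Complex.sq_norm, hsub, Complex.normSq_div, h2, hnormden]
  rw [e1, e2, hp₀im, hwim, show (2:ℝ) * y * t = 2*y*t from rfl,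
    show (2:ℝ) * y * (t / (c^2*t^2 + d^2)) = 2*y*(t/(c^2*t^2 + d^2)) from rfl,
    aux_div _ _ _ _ _ ht hy hK]
  constructor <;> intro h <;> nlinarith [h]

lemma dist_smul_iff (t : ℝ) (ht : 0 < t) (p₀ z : ℍ) (hp₀ : (p₀:ℂ) = t*Complex.I)
    (g : SL(2,ℤ)) :
    dist z p₀ < dist z (g • p₀) ↔
      (z:ℂ).re^2 + (z:ℂ).im^2 + t^2 <
        (((g : Matrix (Fin 2) (Fin 2) ℤ) 1 1 : ℝ)*(z:ℂ).re - ((g : Matrix (Fin 2) (Fin 2) ℤ) 0 1 : ℝ))^2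
          + ((g : Matrix (Fin 2) (Fin 2) ℤ) 1 1 : ℝ)^2*(z:ℂ).im^2
          + t^2*((((g : Matrix (Fin 2) (Fin 2) ℤ) 1 0 : ℝ)*(z:ℂ).re - ((g : Matrix (Fin 2) (Fin 2) ℤ) 0 0 : ℝ))^2
            + ((g : Matrix (Fin 2) (Fin 2) ℤ) 1 0 : ℝ)^2*(z:ℂ).im^2) := by
  apply dist_lt_dist_iff t ht p₀ z (g • p₀) hp₀
  · have h := g.prop
    rw [Matrix.det_fin_two] at h
    exact_mod_cast congrArg (fun n : ℤ => (n:ℝ)) h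
  · rw [UpperHalfPlane.specialLinearGroup_apply, UpperHalfPlane.coe_mk]
    push_cast
    norm_num [algebraMap_int_eq]

theorem dirichlet_domain_eq_fundamental_triangle (t : ℝ) (ht : 1 < t)
    (p₀ : UpperHalfPlane) (hp₀ : (p₀ : ℂ) = t * Complex.I) :
    {z : UpperHalfPlane | ∀ γ : SL(2, ℤ),
        (γ : Matrix (Fin 2) (Fin 2) ℤ) ≠ 1 → (γ : Matrix (Fin 2) (Fin 2) ℤ) ≠ -1 →
        dist z p₀ < dist z (γ • p₀)} =
    {z : UpperHalfPlane | |(z : ℂ).re| < 1 / 2 ∧ 1 < ‖(z : ℂ)‖} := by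
  have ht0 : 0 < t := by linarith
  ext z
  simp only [Set.mem_setOf_eq]
  constructor
  · intro h
    simp only [UpperHalfPlane.coe_re, UpperHalfPlane.coe_im]
    set x := z.re
    set y := z.im
    have h1 := h ⟨!![1,1;0,1], by norm_num [Matrix.det_fin_two_of]⟩ (by decide) (by decide)
    have h2 := h ⟨!![1,-1;0,1], by norm_num [Matrix.det_fin_two_of]⟩ (by decide) (by decide)
    have h3 := h ⟨!![0,-1;1,0], by norm_num [Matrix.det_fin_two_of]⟩ (by decide) (by decide)
    replace h1 := (dist_smul_iff t ht0 p₀ z hp₀ _).mp h1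
    replace h2 := (dist_smul_iff t ht0 p₀ z hp₀ _).mp h2
    replace h3 := (dist_smul_iff t ht0 p₀ z hp₀ _).mp h3
    norm_num [Matrix.SpecialLinearGroup.coe_mk, Matrix.cons_val_zero, Matrix.cons_val_one,
      Matrix.head_cons, Matrix.head_fin_const] at h1 h2 h3
    constructor
    · rw [abs_lt]
      constructor <;> nlinarith [h1, h2]
    · rw [Complex.norm_def, show (1:ℝ) = Real.sqrt 1 by simp]
      apply Real.sqrt_lt_sqrt (by norm_num)
      have hn : 1 < x^2 + y^2 := by
        nlinarith [h3, sq_nonneg (t-1), mul_pos ht0 ht0, (by nlinarith : (0:ℝ) < t^2 - 1)]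
      rw [Complex.normSq_apply]
      simp only [UpperHalfPlane.coe_re, UpperHalfPlane.coe_im]
      nlinarith [hn]
  · rintro ⟨hre, habs⟩ γ h1 h2
    rw [dist_smul_iff t ht0 p₀ z hp₀]
    set A := ((γ : Matrix (Fin 2) (Fin 2) ℤ) 0 0) with hA
    set B := ((γ : Matrix (Fin 2) (Fin 2) ℤ) 0 1) with hB
    set C := ((γ : Matrix (Fin 2) (Fin 2) ℤ) 1 0) with hC
    set D := ((γ : Matrix (Fin 2) (Fin 2) ℤ) 1 1) with hD
    have hdet : A * D - B * C = 1 := by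
      have h := γ.prop
      rw [Matrix.det_fin_two] at h
      exact h
    have hx2 : (z:ℂ).re^2 < 1/4 := by
      rw [abs_lt] at hre
      nlinarith [hre.1, hre.2]
    have hn : 1 < (z:ℂ).re^2 + (z:ℂ).im^2 := by
      have h := Complex.sq_norm (z:ℂ)
      rw [Complex.normSq_apply] at h
      nlinarith [habs, h, norm_nonneg (z:ℂ)]
    have hnt : ¬((-(B:ℝ)) = 0 ∧ (C:ℝ) = 0) := by
      rintro ⟨hb, hc⟩
      have hb' : B = 0 := by exact_mod_cast neg_eq_zero.mp hb
      have hc' : C = 0 := by exact_mod_cast hc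
      rw [hb', hc'] at hdet
      simp only [mul_zero, zero_mul, sub_zero] at hdet
      rcases Int.eq_one_or_neg_one_of_mul_eq_one' hdet with ⟨ha, hd⟩ | ⟨ha, hd⟩
      · apply h1
        ext i j
        fin_cases i <;> fin_cases j <;>
          simp [Matrix.one_apply, ← hA, ← hB, ← hC, ← hD, ha, hb', hc', hd]
      · apply h2
        ext i j
        fin_cases i <;> fin_cases j <;>
          simp [Matrix.one_apply, ← hA, ← hB, ← hC, ← hD, ha, hb', hc', hd]
    have key := key_ineq t (z:ℂ).re (z:ℂ).im (D:ℝ) (-(B:ℝ)) (C:ℝ) (-(A:ℝ)) ht hx2 hn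
      (int_cast_sq_cases D)
      (by simpa [neg_eq_zero, neg_sq] using int_cast_sq_cases B)
      (int_cast_sq_cases C)
      (by simpa [neg_eq_zero, neg_sq] using int_cast_sq_cases A)
      (by nlinarith [(by exact_mod_cast congrArg (fun n : ℤ => (n:ℝ)) hdet : (A:ℝ)*(D:ℝ) - (B:ℝ)*(C:ℝ) = 1)])
      hnt
    nlinarith [key]
end
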